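/- arXiv:0803.2076 — 2 statements merged into one kernel-verified Lean document; each statement's English description precedes it below -/
import Mathlib

section
/- For every finitely generated graded A-module M, the intersection ⋂_{i≥0} rad^{gr,i}(M) is zero; equivalently, ⋂_{i≥0} (rad^gr(A))^i·M = {0}. -/
/-- A submodule `N` of a graded module `M = ⊕ₙ Mₙ` (with grading `gM : ℤ → Submodule k M`)
is *graded* (homogeneous) if it is generated, as an `A`-module, by its homogeneous
elements; equivalently (for modules with a decomposition) `N = ⊕ₙ (N ∩ Mₙ)`. -/
def IsGradedSubmodule {k A M : Type} [Semiring k] [Ring A]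
    [AddCommGroup M] [Module A M] [Module k M]
    (gM : ℤ → Submodule k M) (N : Submodule A M) : Prop :=
  N = Submodule.span A (⋃ n : ℤ, ((N : Set M) ∩ (gM n : Set M)))

/-- A *maximal graded submodule*: a proper graded submodule which is maximal among
proper graded submodules. -/
def IsMaxGradedSubmodule {k A M : Type} [Semiring k] [Ring A]
    [AddCommGroup M] [Module A M] [Module k M]
    (gM : ℤ → Submodule k M) (N : Submodule A M) : Prop :=
  IsGradedSubmodule gM N ∧ N ≠ ⊤ ∧
    ∀ N' : Submodule A M, IsGradedSubmodule gM N' → N < N' → N' = ⊤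

/-- The graded radical `rad^gr(M)` of a graded module: the intersection of all maximal
graded submodules. -/
def gradedRadicalMod {k A M : Type} [Semiring k] [Ring A]
    [AddCommGroup M] [Module A M] [Module k M]
    (gM : ℤ → Submodule k M) : Submodule A M :=
  sInf {N : Submodule A M | IsMaxGradedSubmodule gM N}

/-- The graded radical `rad^gr(A)` of a graded algebra: the intersection of all
maximal graded left ideals. -/
def gradedRadical {k A : Type} [Semiring k] [Ring A] [Module k A]
    (gA : ℤ → Submodule k A) : Ideal A :=
  gradedRadicalMod gA

set_option linter.unusedSectionVars false
set_option maxHeartbeats 1000000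

open DirectSum


section aux

variable {k A M : Type} [Field k] [Ring A] [Algebra k A]
  (gA : ℤ → Submodule k A) [GradedAlgebra gA]
  [AddCommGroup M] [Module A M] [Module k M] [IsScalarTower k A M]
  (gM : ℤ → Submodule k M) [DirectSum.Decomposition gM]

noncomputable def compL (n : ℤ) : M →ₗ[k] M :=
  (gM n).subtype ∘ₗ (DirectSum.component k ℤ (fun i => gM i) n) ∘ₗ
    (DirectSum.decomposeLinearEquiv gM).toLinearMap

@[simp] theorem compL_apply (n : ℤ) (x : M) :
    compL gM n x = (DirectSum.decompose gM x n : M) := rfl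

theorem compL_of_mem_same {x : M} {n : ℤ} (hx : x ∈ gM n) : compL gM n x = x := by
  simp [DirectSum.decompose_of_mem_same gM hx]

theorem compL_of_mem_ne {x : M} {i n : ℤ} (hx : x ∈ gM i) (h : i ≠ n) :
    compL gM n x = 0 := by
  simp [DirectSum.decompose_of_mem_ne gM hx h]

theorem compL_mem (n : ℤ) (x : M) : compL gM n x ∈ gM n := by
  simp only [compL_apply]; exact SetLike.coe_mem _

/-- sum of components equals the element -/
theorem sum_compL (x : M) : ∃ s : Finset ℤ, (∑ n ∈ s, compL gM n x) = x := by
  classical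
  refine ⟨(DirectSum.decompose gM x).support, ?_⟩
  simpa using DirectSum.sum_support_decompose gM x

variable (hsmul : ∀ (i j : ℤ), ∀ a ∈ gA i, ∀ m ∈ gM j, a • m ∈ gM (i + j))
include hsmul

/-- left multiplication by a homogeneous element shifts components -/
theorem smul_compL {a : A} {i : ℤ} (ha : a ∈ gA i) (x : M) (e : ℤ) :
    a • compL gM e x = compL gM (i + e) (a • x) := by
  induction x using DirectSum.Decomposition.inductionOn gM with
  | zero => simp
  | @homogeneous j m =>
    obtain ⟨m, hm⟩ := m
    by_cases hje : j = e
    · subst hje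
      rw [compL_of_mem_same gM hm, compL_of_mem_same gM (hsmul i j a ha m hm)]
    · rw [compL_of_mem_ne gM hm hje, smul_zero,
        compL_of_mem_ne gM (hsmul i j a ha m hm) (by omega)]
  | add x y hx hy => rw [map_add, smul_add, smul_add, map_add, hx, hy]

/-- component of a product: expansion over the components of `a` -/
theorem compL_smul_eq_sum (a : A) (x : M) (n : ℤ) :
    ∃ s : Finset ℤ, (∀ i ∈ s, compL gA i a ≠ 0) ∧
      compL gM n (a • x) = ∑ i ∈ s, (compL gA i a) • compL gM (n - i) x := by
  classical
  refine ⟨(DirectSum.decompose gA a).support, ?_, ?_⟩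
  · intro i hi
    simp only [compL_apply]
    exact fun h => (DFinsupp.mem_support_iff.mp hi) (Subtype.ext h)
  · have ha : a = ∑ i ∈ (DirectSum.decompose gA a).support, compL gA i a := by
      obtain ⟨s, hs⟩ := sum_compL gA a
      classical
      simpa using (DirectSum.sum_support_decompose gA a).symm
    conv_lhs => rw [show a • x = ∑ i ∈ (DirectSum.decompose gA a).support,
      (compL gA i a) • x by rw [← Finset.sum_smul, ← ha]]
    rw [map_sum]
    refine Finset.sum_congr rfl fun i _ => ?_
    rw [smul_compL gA gM hsmul (compL_mem gA i a), show i + (n - i) = n by ring]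

omit hsmul

theorem hsmulA : ∀ (i j : ℤ), ∀ a ∈ gA i, ∀ m ∈ gA j, a • m ∈ gA (i + j) := by
  intro i j a ha m hm
  rw [smul_eq_mul]
  exact SetLike.mul_mem_graded ha hm


/-- right multiplication by a homogeneous element shifts components -/
theorem compL_mul_homog {d : A} {δ : ℤ} (hd : d ∈ gA δ) (c : A) (e : ℤ) :
    compL gA e c * d = compL gA (e + δ) (c * d) := by
  induction c using DirectSum.Decomposition.inductionOn gA with
  | zero => simp
  | @homogeneous j c =>
    obtain ⟨c, hc⟩ := c
    by_cases hje : j = e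
    · subst hje
      rw [compL_of_mem_same gA hc, compL_of_mem_same gA (SetLike.mul_mem_graded hc hd)]
    · rw [compL_of_mem_ne gA hc hje, zero_mul,
        compL_of_mem_ne gA (SetLike.mul_mem_graded hc hd) (by omega)]
  | add x y hx hy =>
    rw [map_add, add_mul, add_mul, map_add, hx, hy]

include hsmul

theorem cc_of_isGraded {N : Submodule A M} (hN : IsGradedSubmodule gM N) :
    ∀ x ∈ N, ∀ n : ℤ, compL gM n x ∈ N := by
  classical
  set S : Submodule A M :=
    { carrier := {m | ∀ n : ℤ, compL gM n m ∈ N}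
      add_mem' := fun hx hy n => by rw [map_add]; exact N.add_mem (hx n) (hy n)
      zero_mem' := fun n => by rw [map_zero]; exact N.zero_mem
      smul_mem' := fun a m hm => by
        intro n
        obtain ⟨s, -, hs⟩ := compL_smul_eq_sum gA gM hsmul a m n
        rw [hs]
        exact N.sum_mem fun i _ => N.smul_mem _ (hm _) } with hSdef
  have hle : N ≤ S := by
    conv_lhs => rw [hN]
    rw [Submodule.span_le]
    intro m hm
    simp only [Set.mem_iUnion, Set.mem_inter_iff] at hm
    obtain ⟨j, hmN, hmj⟩ := hm
    intro n
    by_cases h : j = n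
    · subst h; rw [compL_of_mem_same gM hmj]; exact hmN
    · rw [compL_of_mem_ne gM hmj h]; exact N.zero_mem
  exact fun x hx n => hle hx n

omit hsmul

theorem isGraded_of_cc {N : Submodule A M}
    (hN : ∀ x ∈ N, ∀ n : ℤ, compL gM n x ∈ N) : IsGradedSubmodule gM N := by
  refine le_antisymm ?_ (Submodule.span_le.mpr ?_)
  · intro x hx
    obtain ⟨s, hs⟩ := sum_compL gM x
    rw [← hs]
    refine Submodule.sum_mem _ fun n _ => Submodule.subset_span ?_
    simp only [Set.mem_iUnion, Set.mem_inter_iff]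
    exact ⟨n, hN x hx n, compL_mem gM n x⟩
  · intro m hm
    simp only [Set.mem_iUnion, Set.mem_inter_iff] at hm
    exact hm.choose_spec.1

theorem isGraded_span_homog {S : Set M} (hS : ∀ s ∈ S, ∃ n : ℤ, s ∈ gM n) :
    IsGradedSubmodule gM (Submodule.span A S) := by
  refine le_antisymm (Submodule.span_le.mpr ?_) (Submodule.span_le.mpr ?_)
  · intro s hs
    obtain ⟨n, hn⟩ := hS s hs
    refine Submodule.subset_span ?_
    simp only [Set.mem_iUnion, Set.mem_inter_iff]
    exact ⟨n, Submodule.subset_span hs, hn⟩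
  · intro m hm
    simp only [Set.mem_iUnion, Set.mem_inter_iff] at hm
    exact hm.choose_spec.1

/-- products of component-closed k-submodules of A are component-closed -/
theorem cc_mul {P Q : Submodule k A}
    (hP : ∀ x ∈ P, ∀ n : ℤ, compL gA n x ∈ P)
    (hQ : ∀ x ∈ Q, ∀ n : ℤ, compL gA n x ∈ Q) :
    ∀ x ∈ P * Q, ∀ n : ℤ, compL gA n x ∈ P * Q := by
  intro x hx
  refine Submodule.mul_induction_on (C := fun x => ∀ n : ℤ, compL gA n x ∈ P * Q) hx ?_ ?_
  · intro p hp q hq n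
    obtain ⟨s, -, hs⟩ := compL_smul_eq_sum gA gA (hsmulA gA) p q n
    rw [show p * q = p • q from rfl, hs]
    refine Submodule.sum_mem _ fun i _ => ?_
    rw [smul_eq_mul]
    exact Submodule.mul_mem_mul (hP p hp i) (hQ q hq (n - i))
  · intro x y hx hy n
    rw [map_add]; exact (P * Q).add_mem (hx n) (hy n)

omit hsmul

/-- right multiplication as a map of left A-modules -/
def mulRightA (d : A) : A →ₗ[A] A where
  toFun c := c * d
  map_add' x y := add_mul x y d
  map_smul' a c := by simp [smul_eq_mul, mul_assoc]

@[simp] theorem mulRightA_apply (d c : A) : mulRightA d c = c * d := rfl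

/-- Key lemma: the graded radical multiplies homogeneous elements of `D`
into any "relatively maximal" component-closed `N' ≤ D`. -/
theorem radical_mul_homog_mem
    {D N' : Submodule A A}
    (hN : ∀ x ∈ N', ∀ n : ℤ, compL gA n x ∈ N')
    (hND : N' ≤ D)
    (hmax : ∀ X : Submodule A A, (∀ x ∈ X, ∀ n : ℤ, compL gA n x ∈ X) → N' < X → X ≤ D → X = D)
    {d : A} {δ : ℤ} (hdh : d ∈ gA δ) (hd : d ∈ D)
    {j : A} (hj : j ∈ gradedRadical gA) : j * d ∈ N' := by
  by_cases hdN : d ∈ N'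
  · rw [← smul_eq_mul]; exact N'.smul_mem j hdN
  · set L : Submodule A A := N'.comap (mulRightA d) with hLdef
    have hLmem : ∀ c : A, c ∈ L ↔ c * d ∈ N' := fun c => Iff.rfl
    have hLcc : ∀ c ∈ L, ∀ n : ℤ, compL gA n c ∈ L := by
      intro c hc n
      rw [hLmem, compL_mul_homog gA hdh]
      exact hN _ ((hLmem c).mp hc) _
    have hLne : L ≠ ⊤ := by
      intro h
      exact hdN (by simpa using (hLmem 1).mp (h ▸ Submodule.mem_top))
    have hLmax : IsMaxGradedSubmodule gA L := by
      refine ⟨isGraded_of_cc gA hLcc, hLne, ?_⟩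
      intro L'' hg hlt
      obtain ⟨c₀, hc₀L'', hc₀L⟩ := SetLike.exists_of_lt hlt
      have hgcc := cc_of_isGraded gA gA (hsmulA gA) hg
      set X : Submodule A A := N' ⊔ (L''.map (mulRightA d)) with hXdef
      have hXcc : ∀ x ∈ X, ∀ n : ℤ, compL gA n x ∈ X := by
        intro x hx n
        rw [hXdef, Submodule.mem_sup] at hx
        obtain ⟨y, hy, z, hz, rfl⟩ := hx
        obtain ⟨c, hc, rfl⟩ := Submodule.mem_map.mp hz
        rw [map_add]
        refine Submodule.add_mem_sup (hN _ hy _) ?_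
        rw [mulRightA_apply, show compL gA n (c * d) = compL gA (n - δ) c * d by
          rw [compL_mul_homog gA hdh, sub_add_cancel]]
        exact Submodule.mem_map.mpr ⟨_, hgcc _ hc _, rfl⟩
      have hXD : X ≤ D := by
        rw [hXdef]
        refine sup_le (le_trans ?_ le_rfl) ?_
        · intro y hy
          exact hND hy
        · rintro z hz
          obtain ⟨c, hc, rfl⟩ := Submodule.mem_map.mp hz
          rw [mulRightA_apply, ← smul_eq_mul]
          exact D.smul_mem c hd
      have hNX : N' < X := by
        refine lt_of_le_of_ne le_sup_left ?_
        intro h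
        refine hc₀L ((hLmem c₀).mpr ?_)
        rw [h]
        exact Submodule.mem_sup_right (Submodule.mem_map.mpr ⟨c₀, hc₀L'', rfl⟩)
      have hXeq := hmax X hXcc hNX hXD
      have hdX : d ∈ X := hXeq ▸ hd
      rw [hXdef, Submodule.mem_sup] at hdX
      obtain ⟨y, hy, z, hz, hyz⟩ := hdX
      obtain ⟨c, hc, rfl⟩ := Submodule.mem_map.mp hz
      have h' : y + c * d = d := by simpa using hyz
      have hycd : d - c * d = y := sub_eq_of_eq_add h'.symm
      have h1c : (1 : A) - c ∈ L := by
        rw [hLmem, sub_mul, one_mul, hycd]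
        exact hy
      have h1 : (1 : A) ∈ L'' := by
        have := L''.add_mem (hlt.le h1c) hc
        simpa using this
      exact Submodule.eq_top_iff'.mpr fun x => by
        simpa using L''.smul_mem x h1
    have : gradedRadical gA ≤ L := sInf_le hLmax
    exact this hj

theorem radical_mul_mem
    {D N' : Submodule A A}
    (hD : ∀ x ∈ D, ∀ n : ℤ, compL gA n x ∈ D)
    (hN : ∀ x ∈ N', ∀ n : ℤ, compL gA n x ∈ N')
    (hND : N' ≤ D)
    (hmax : ∀ X : Submodule A A, (∀ x ∈ X, ∀ n : ℤ, compL gA n x ∈ X) → N' < X → X ≤ D → X = D)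
    {d : A} (hd : d ∈ D)
    {j : A} (hj : j ∈ gradedRadical gA) : j * d ∈ N' := by
  obtain ⟨s, hs⟩ := sum_compL gA d
  rw [← hs, Finset.mul_sum]
  exact N'.sum_mem fun n _ =>
    radical_mul_homog_mem gA hN hND hmax (compL_mem gA n d) (hD d hd n) hj

/-- the graded radical is a two-sided ideal -/
theorem radical_mul_right {j : A} (hj : j ∈ gradedRadical gA) (a : A) :
    j * a ∈ gradedRadical gA := by
  have : ∀ L ∈ {N : Submodule A A | IsMaxGradedSubmodule gA N}, j * a ∈ L := by
    intro L hL
    have hLcc := cc_of_isGraded gA gA (hsmulA gA) hL.1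
    refine radical_mul_mem gA (D := ⊤) (N' := L)
      (fun x _ n => Submodule.mem_top) hLcc le_top ?_ Submodule.mem_top hj
    intro X hXcc hlt _
    exact hL.2.2 X (isGraded_of_cc gA hXcc) hlt
  exact Submodule.mem_sInf.mpr this

theorem radical_cc : ∀ x ∈ gradedRadical gA, ∀ n : ℤ, compL gA n x ∈ gradedRadical gA := by
  intro x hx n
  rw [gradedRadical, gradedRadicalMod, Submodule.mem_sInf] at hx ⊢
  intro L hL
  exact cc_of_isGraded gA gA (hsmulA gA) hL.1 x (hx L hL) n

theorem cc_one : ∀ x ∈ (1 : Submodule k A), ∀ n : ℤ, compL gA n x ∈ (1 : Submodule k A) := by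
  intro x hx n
  obtain ⟨r, rfl⟩ := Submodule.mem_one.mp hx
  have h0 : algebraMap k A r ∈ gA 0 := by
    rw [Algebra.algebraMap_eq_smul_one]
    exact (gA 0).smul_mem r (SetLike.one_mem_graded gA)
  by_cases h : (0 : ℤ) = n
  · rw [← h, compL_of_mem_same gA h0]; exact hx
  · rw [compL_of_mem_ne gA h0 h]; exact Submodule.zero_mem _

/-- J' := the graded radical as k-submodule -/
noncomputable abbrev Jk : Submodule k A := Submodule.restrictScalars k (gradedRadical gA)

theorem Jpow_cc (i : ℕ) : ∀ x ∈ (Jk gA) ^ i, ∀ n : ℤ, compL gA n x ∈ (Jk gA) ^ i := by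
  induction i with
  | zero => rw [pow_zero]; exact cc_one gA
  | succ i ih =>
    rw [pow_succ]
    exact cc_mul gA ih (fun x hx n => radical_cc gA x hx n)

theorem Jpow_mul_right {i : ℕ} : ∀ x ∈ (Jk gA) ^ (i + 1), ∀ a : A, x * a ∈ (Jk gA) ^ (i + 1) := by
  induction i with
  | zero =>
    intro x hx a
    rw [pow_one] at *
    exact radical_mul_right gA hx a
  | succ i ih =>
    intro x hx a
    rw [pow_succ] at hx ⊢
    refine Submodule.mul_induction_on (C := fun x => ∀ b : A, x * b ∈ (Jk gA) ^ (i+1) * Jk gA) hx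
      ?_ ?_ a
    · intro p hp q hq b
      rw [mul_assoc]
      exact Submodule.mul_mem_mul hp (radical_mul_right gA hq b)
    · intro x y hx hy b
      rw [add_mul]
      exact Submodule.add_mem _ (hx b) (hy b)

theorem Jpow_mul_left {i : ℕ} : ∀ x ∈ (Jk gA) ^ (i + 1), ∀ a : A, a * x ∈ (Jk gA) ^ (i + 1) := by
  induction i with
  | zero =>
    intro x hx a
    rw [pow_one] at *
    rw [← smul_eq_mul]
    exact (gradedRadical gA).smul_mem a hx
  | succ i ih =>
    intro x hx a
    rw [pow_succ] at hx ⊢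
    refine Submodule.mul_induction_on (C := fun x => ∀ b : A, b * x ∈ (Jk gA) ^ (i+1) * Jk gA) hx
      ?_ ?_ a
    · intro p hp q hq b
      rw [← mul_assoc]
      exact Submodule.mul_mem_mul (ih p hp b) hq
    · intro x y hx hy b
      rw [mul_add]
      exact Submodule.add_mem _ (hx b) (hy b)

theorem Jpow_antitone {i : ℕ} : (Jk gA) ^ (i + 2) ≤ (Jk gA) ^ (i + 1) := by
  rw [show i + 2 = (i+1) + 1 from rfl, pow_succ]
  refine Submodule.mul_le.mpr fun p hp q hq => ?_
  exact Jpow_mul_right gA p hp q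

/-- the filtration by "components below `b` vanish" -/
noncomputable def Fil (b : ℤ) : Submodule k M where
  carrier := {x | ∀ e : ℤ, e < b → compL gM e x = 0}
  add_mem' := fun hx hy e he => by rw [map_add, hx e he, hy e he, add_zero]
  zero_mem' := fun e he => map_zero _
  smul_mem' := fun r x hx e he => by rw [map_smul, hx e he, smul_zero]

theorem mem_Fil_iff {b : ℤ} {x : M} :
    x ∈ Fil gM b ↔ ∀ e : ℤ, e < b → compL gM e x = 0 := Iff.rfl

theorem g_le_Fil {n b : ℤ} (h : b ≤ n) : gM n ≤ Fil gM b := by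
  intro x hx
  rw [mem_Fil_iff]
  intro e he
  exact compL_of_mem_ne gM hx (by omega)

theorem Fil_antitone {b b' : ℤ} (h : b ≤ b') : Fil gM b' ≤ Fil gM b := by
  intro x hx
  rw [mem_Fil_iff] at hx ⊢
  intro e he
  exact hx e (by omega)

theorem exists_mem_Fil (x : M) : ∃ b : ℤ, b ≤ 0 ∧ x ∈ Fil gM b := by
  classical
  set t := (DirectSum.decompose gM x).support with ht
  have hnot : ∀ e : ℤ, e ∉ t → compL gM e x = 0 := by
    intro e he
    have : DirectSum.decompose gM x e = 0 := DFinsupp.notMem_support_iff.mp he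
    simp only [compL_apply, this, ZeroMemClass.coe_zero]
  by_cases h : t.Nonempty
  · refine ⟨min (t.min' h) 0, min_le_right _ _, ?_⟩
    intro e he
    refine hnot e fun hmem => ?_
    have := t.min'_le e hmem
    omega
  · refine ⟨0, le_refl _, ?_⟩
    intro e he
    exact hnot e (by simp [Finset.not_nonempty_iff_eq_empty.mp h])

theorem exists_forall_mem_Fil (t : Finset M) : ∃ b : ℤ, b ≤ 0 ∧ ∀ x ∈ t, x ∈ Fil gM b := by
  classical
  induction t using Finset.cons_induction with
  | empty => exact ⟨0, le_refl _, fun x hx => absurd hx (Finset.notMem_empty x)⟩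
  | cons a t hat ih =>
    obtain ⟨b₁, hb₁, hb₁'⟩ := ih
    obtain ⟨b₂, hb₂, hb₂'⟩ := exists_mem_Fil gM a
    refine ⟨min b₁ b₂, by omega, ?_⟩
    intro x hx
    rcases Finset.mem_cons.mp hx with rfl | hx
    · exact Fil_antitone gM (min_le_right _ _) hb₂'
    · exact Fil_antitone gM (min_le_left _ _) (hb₁' x hx)

include hsmul in
theorem smul_mem_Fil {a : A} {b c : ℤ} (ha : a ∈ Fil gA b) {x : M} (hx : x ∈ Fil gM c) :
    a • x ∈ Fil gM (b + c) := by
  intro n hn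
  obtain ⟨s, hs0, hs⟩ := compL_smul_eq_sum gA gM hsmul a x n
  rw [hs]
  refine Finset.sum_eq_zero fun i hi => ?_
  have hib : b ≤ i := by
    by_contra h
    exact hs0 i hi (ha i (by omega))
  rw [hx (n - i) (by omega), smul_zero]

theorem mul_mem_Fil {a a' : A} {b c : ℤ} (ha : a ∈ Fil gA b) (ha' : a' ∈ Fil gA c) :
    a * a' ∈ Fil gA (b + c) :=
  smul_mem_Fil gA gA (hsmulA gA) ha ha'

theorem one_mem_Fil : (1 : A) ∈ Fil gA 0 :=
  g_le_Fil gA (le_refl 0) (SetLike.one_mem_graded gA)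

/-- package a left-multiplication-closed k-submodule of A as a left ideal -/
def toA (P : Submodule k A) (h : ∀ a : A, ∀ x ∈ P, a * x ∈ P) : Submodule A A where
  carrier := P
  add_mem' := P.add_mem
  zero_mem' := P.zero_mem
  smul_mem' := fun a x hx => by rw [smul_eq_mul]; exact h a x hx

@[simp] theorem mem_toA {P : Submodule k A} {h} {x : A} : x ∈ toA P h ↔ x ∈ P := Iff.rfl

/-- graded Nakayama: if `I ⊔ J^(n+1)` stabilizes then `J^(n+1) ≤ I`. -/
theorem Jpow_stab_le_I
    {I : Submodule A A}
    (hIcc : ∀ x ∈ I, ∀ n : ℤ, compL gA n x ∈ I)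
    (hNoeth : IsNoetherian k (A ⧸ (I.restrictScalars k)))
    {n : ℕ}
    (hstab : (I.restrictScalars k) ⊔ (Jk gA)^(n+1) = (I.restrictScalars k) ⊔ (Jk gA)^(n+2)) :
    (Jk gA)^(n+1) ≤ I.restrictScalars k := by
  by_contra hcon
  set Ik := I.restrictScalars k with hIk
  have hleft : ∀ a : A, ∀ x ∈ Ik ⊔ (Jk gA)^(n+1), a * x ∈ Ik ⊔ (Jk gA)^(n+1) := by
    intro a x hx
    rw [Submodule.mem_sup] at hx
    obtain ⟨y, hy, z, hz, rfl⟩ := hx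
    rw [mul_add]
    refine Submodule.add_mem_sup ?_ (Jpow_mul_left gA z hz a)
    rw [← smul_eq_mul]
    exact I.smul_mem a hy
  set D : Submodule A A := toA (Ik ⊔ (Jk gA)^(n+1)) hleft with hD
  have hDcc : ∀ x ∈ D, ∀ m : ℤ, compL gA m x ∈ D := by
    intro x hx m
    rw [mem_toA, Submodule.mem_sup] at hx
    obtain ⟨y, hy, z, hz, rfl⟩ := hx
    rw [mem_toA, map_add]
    exact Submodule.add_mem_sup (hIcc y hy m) (Jpow_cc gA (n+1) z hz m)
  have hID : I ≤ D := fun x hx => Submodule.mem_sup_left hx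
  have hIneD : I ≠ D := by
    intro h
    refine hcon fun z hz => ?_
    have : z ∈ D := Submodule.mem_sup_right hz
    rw [← h] at this
    exact this
  -- the set of proper graded intermediate submodules
  set S : Set (Submodule A A) :=
    {X | (∀ x ∈ X, ∀ m : ℤ, compL gA m x ∈ X) ∧ I ≤ X ∧ X < D} with hS
  have hIS : I ∈ S := ⟨hIcc, le_refl I, lt_of_le_of_ne hID hIneD⟩
  -- find a maximal element of S using Noetherianness of A ⧸ Ik
  set q := Ik.mkQ with hq
  set Θ : Submodule A A → Submodule k (A ⧸ Ik) := fun X => (X.restrictScalars k).map q with hΘ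
  have hΘinj : ∀ X Y : Submodule A A, I ≤ X → I ≤ Y → Θ X = Θ Y → X = Y := by
    intro X Y hX hY hXY
    have recov : ∀ Z : Submodule A A, I ≤ Z →
        (Z.restrictScalars k) = Submodule.comap q (Θ Z) := by
      intro Z hZ
      rw [hΘ, Submodule.comap_map_eq, Submodule.ker_mkQ, sup_eq_left.mpr]
      intro u hu
      exact hZ hu
    apply Submodule.restrictScalars_injective k
    rw [recov X hX, recov Y hY, hXY]
  obtain ⟨Y, ⟨X₀, hX₀S, rfl⟩, hYmax⟩ :=
    (set_has_maximal_iff_noetherian.mpr hNoeth) (Θ '' S) ⟨Θ I, ⟨I, hIS, rfl⟩⟩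
  have hX₀max : ∀ X ∈ S, X₀ ≤ X → X = X₀ := by
    intro X hXS hle
    refine hΘinj X X₀ hXS.2.1 hX₀S.2.1 ?_
    have hΘle : Θ X₀ ≤ Θ X :=
      Submodule.map_mono fun u hu => hle hu
    have := hYmax (Θ X) ⟨X, hXS, rfl⟩
    exact le_antisymm (eq_of_le_of_not_lt hΘle this).symm.le hΘle
  have hmax : ∀ X : Submodule A A, (∀ x ∈ X, ∀ m : ℤ, compL gA m x ∈ X) → X₀ < X → X ≤ D →
      X = D := by
    intro X hXcc hlt hXD
    by_contra hne
    have hXS : X ∈ S := ⟨hXcc, le_trans hX₀S.2.1 hlt.le, lt_of_le_of_ne hXD hne⟩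
    have := hX₀max X hXS hlt.le
    exact hlt.ne' this
  -- now D = Ik ⊔ J^(n+2) ≤ X₀ < D
  have hDle : D ≤ X₀ := by
    intro x hx
    rw [mem_toA, hstab, Submodule.mem_sup] at hx
    obtain ⟨y, hy, z, hz, rfl⟩ := hx
    refine X₀.add_mem (hX₀S.2.1 hy) ?_
    rw [show n + 2 = (n + 1) + 1 from rfl, pow_succ'] at hz
    refine Submodule.mul_induction_on hz ?_ fun u v hu hv => X₀.add_mem hu hv
    intro j hj t ht
    exact radical_mul_mem gA hDcc hX₀S.1 hX₀S.2.2.le hmax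
      (Submodule.mem_sup_right ht) hj
  exact absurd (lt_of_lt_of_le hX₀S.2.2 hDle) (lt_irrefl X₀)

noncomputable def FilAlg : Subalgebra k A where
  carrier := {x : A | x ∈ Fil gA 0}
  mul_mem' := fun {a b} ha hb => by
    have h := mul_mem_Fil gA ha hb
    rwa [add_zero] at h
  one_mem' := one_mem_Fil gA
  add_mem' := fun {a b} ha hb => (Fil gA 0).add_mem ha hb
  zero_mem' := (Fil gA 0).zero_mem
  algebraMap_mem' := fun r => by
    rw [Algebra.algebraMap_eq_smul_one]
    exact (Fil gA 0).smul_mem r (one_mem_Fil gA)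

@[simp] theorem mem_FilAlg {x : A} : x ∈ FilAlg gA ↔ x ∈ Fil gA 0 := Iff.rfl

end aux

/-- In the setup where `A` is a ℤ-graded `k`-algebra which is a graded
`S(V)`-algebra (via `φ : V →ₗ[k] A`, degree-preserving with central image), finitely
generated as an `S(V)`-module: for every finitely generated graded `A`-module `M`, the
intersection `⋂_{i ≥ 0} rad^{gr,i}(M)` is zero; equivalently (and this is the form
stated here) `⋂_{i ≥ 0} (rad^gr(A))^i · M = {0}`, the `i`-th power of the graded
radical being taken as a `k`-subspace of `A`. -/
theorem statement11 {k V A M : Type} [Field k]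
    [AddCommGroup V] [Module k V] [FiniteDimensional k V]
    (gV : ℤ → Submodule k V) [DirectSum.Decomposition gV]
    (hVpos : ∀ n : ℤ, n ≤ 0 → gV n = ⊥)
    [Ring A] [Algebra k A] (gA : ℤ → Submodule k A) [GradedAlgebra gA]
    (φ : V →ₗ[k] A)
    (hcentral : ∀ (v : V) (a : A), φ v * a = a * φ v)
    (hgraded : ∀ n : ℤ, ∀ v ∈ gV n, φ v ∈ gA n)
    (hfin : ∃ s : Finset A, ∀ a : A,
      a ∈ Submodule.span k {x : A | ∃ c ∈ Algebra.adjoin k (Set.range ⇑φ), ∃ t ∈ s, x = c * t})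
    [AddCommGroup M] [Module A M] [Module k M] [IsScalarTower k A M]
    (gM : ℤ → Submodule k M) [DirectSum.Decomposition gM]
    (hsmul : ∀ (i j : ℤ), ∀ a ∈ gA i, ∀ m ∈ gM j, a • m ∈ gM (i + j))
    (hfg : ∃ s : Finset M, (∀ x ∈ s, ∃ n : ℤ, x ∈ gM n) ∧
      Submodule.span A (s : Set M) = ⊤) :
    (⨅ i : ℕ, Submodule.span A {x : M |
        ∃ a ∈ (Submodule.restrictScalars k (gradedRadical gA)) ^ i, ∃ m : M, x = a • m}) =
      ⊥ := by
  classical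
  -- the homogeneous generators of the ideal generated by φ(V)
  set Sφ : Set A := ⋃ n : ℤ, {x : A | (∃ v : V, φ v = x) ∧ x ∈ gA n ∧ 1 ≤ n} with hSφdef
  have hSφ_homog : ∀ s ∈ Sφ, ∃ n : ℤ, s ∈ gA n := by
    intro s hs
    simp only [hSφdef, Set.mem_iUnion, Set.mem_setOf_eq] at hs
    obtain ⟨n, -, hn, -⟩ := hs
    exact ⟨n, hn⟩
  have hSφ_Fil : ∀ s ∈ Sφ, s ∈ Fil gA 1 := by
    intro s hs
    simp only [hSφdef, Set.mem_iUnion, Set.mem_setOf_eq] at hs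
    obtain ⟨n, -, hn, h1⟩ := hs
    exact g_le_Fil gA h1 hn
  have hSφ_cent : ∀ s ∈ Sφ, ∀ b : A, s * b = b * s := by
    intro s hs b
    simp only [hSφdef, Set.mem_iUnion, Set.mem_setOf_eq] at hs
    obtain ⟨n, ⟨v, rfl⟩, -, -⟩ := hs
    exact hcentral v b
  set I : Submodule A A := Submodule.span A Sφ with hIdef
  set Ik : Submodule k A := I.restrictScalars k with hIkdef
  have hrange : ∀ v : V, φ v ∈ I := by
    intro v
    obtain ⟨s, hs⟩ := sum_compL gV v
    rw [← hs, map_sum]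
    refine Submodule.sum_mem _ fun n _ => ?_
    by_cases hn : 1 ≤ n
    · refine Submodule.subset_span ?_
      simp only [hSφdef, Set.mem_iUnion, Set.mem_setOf_eq]
      exact ⟨n, ⟨_, rfl⟩, hgraded n _ (compL_mem gV n v), hn⟩
    · have h0 : compL gV n v = 0 := by
        have h := compL_mem gV n v
        rw [hVpos n (by omega)] at h
        simpa using h
      rw [h0, map_zero]
      exact Submodule.zero_mem _
  have hIcc : ∀ x ∈ I, ∀ n : ℤ, compL gA n x ∈ I :=
    cc_of_isGraded gA gA (hsmulA gA) (isGraded_span_homog gA hSφ_homog)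
  have hImulright : ∀ x ∈ I, ∀ t : A, x * t ∈ I := by
    intro x hx t
    induction hx using Submodule.span_induction with
    | mem s hs => rw [hSφ_cent s hs t, ← smul_eq_mul]; exact I.smul_mem t (Submodule.subset_span hs)
    | zero => rw [zero_mul]; exact I.zero_mem
    | add u v hu hv hu' hv' => rw [add_mul]; exact I.add_mem hu' hv'
    | smul a u hu hu' => rw [smul_eq_mul, mul_assoc, ← smul_eq_mul]; exact I.smul_mem a hu'
  -- Φ, the k-span of the homogeneous generators; central
  set Φ : Submodule k A := Submodule.span k Sφ with hΦdef
  have hΦcent : ∀ f ∈ Φ, ∀ b : A, f * b = b * f := by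
    intro f hf b
    induction hf using Submodule.span_induction with
    | mem s hs => exact hSφ_cent s hs b
    | zero => rw [zero_mul, mul_zero]
    | add u v hu hv hu' hv' => rw [add_mul, mul_add, hu', hv']
    | smul r u hu hu' => rw [smul_mul_assoc, mul_smul_comm, hu']
  have hΦpowcent : ∀ l : ℕ, ∀ f ∈ Φ ^ l, ∀ b : A, f * b = b * f := by
    intro l
    induction l with
    | zero =>
      intro f hf b
      rw [pow_zero] at hf
      obtain ⟨r, rfl⟩ := Submodule.mem_one.mp hf
      rw [Algebra.algebraMap_eq_smul_one, smul_mul_assoc, mul_smul_comm, one_mul, mul_one]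
    | succ l ih =>
      intro f hf
      rw [pow_succ] at hf
      refine Submodule.mul_induction_on (C := fun f => ∀ b : A, f * b = b * f) hf ?_ ?_
      · intro p hp q hq b
        rw [mul_assoc, hΦcent q hq b, ← mul_assoc, ih p hp b, mul_assoc]
      · intro u v hu hv b
        rw [add_mul, mul_add, hu b, hv b]
  -- ⊤ * Φ^l facts
  have hTΦ_left : ∀ l : ℕ, ∀ x ∈ (⊤ : Submodule k A) * Φ ^ l, ∀ a : A,
      a * x ∈ (⊤ : Submodule k A) * Φ ^ l := by
    intro l x hx
    refine Submodule.mul_induction_on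
      (C := fun x => ∀ a : A, a * x ∈ (⊤ : Submodule k A) * Φ ^ l) hx ?_ ?_
    · intro p hp q hq a
      rw [← mul_assoc]
      exact Submodule.mul_mem_mul Submodule.mem_top hq
    · intro u v hu hv a
      rw [mul_add]
      exact Submodule.add_mem _ (hu a) (hv a)
  have hIbound : ∀ l : ℕ, Ik ^ l ≤ (⊤ : Submodule k A) * Φ ^ l := by
    intro l
    induction l with
    | zero =>
      rw [pow_zero, pow_zero]
      intro x hx
      obtain ⟨r, rfl⟩ := Submodule.mem_one.mp hx
      rw [Algebra.algebraMap_eq_smul_one]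
      refine Submodule.smul_mem _ r ?_
      rw [show (1 : A) = 1 * 1 by rw [one_mul]]
      exact Submodule.mul_mem_mul Submodule.mem_top (Submodule.mem_one.mpr ⟨1, map_one _⟩)
    | succ l ih =>
      have hIk1 : Ik ≤ (⊤ : Submodule k A) * Φ := by
        intro x hx
        rw [hIkdef, Submodule.restrictScalars_mem] at hx
        induction hx using Submodule.span_induction with
        | mem s hs =>
          rw [show s = 1 * s by rw [one_mul]]
          exact Submodule.mul_mem_mul Submodule.mem_top (Submodule.subset_span hs)
        | zero => exact Submodule.zero_mem _
        | add u v hu hv hu' hv' => exact Submodule.add_mem _ hu' hv'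
        | smul a u hu hu' =>
          rw [smul_eq_mul]
          have h := hTΦ_left 1 u (by rwa [pow_one]) a
          rwa [pow_one] at h
      rw [pow_succ, pow_succ]
      refine le_trans (mul_le_mul' ih hIk1) ?_
      refine Submodule.mul_le.mpr fun x hx y hy => ?_
      refine Submodule.mul_induction_on
        (C := fun x => x * y ∈ (⊤ : Submodule k A) * (Φ ^ l * Φ)) hx ?_ ?_
      · intro p hp q hq
        refine Submodule.mul_induction_on
          (C := fun y => p * q * y ∈ (⊤ : Submodule k A) * (Φ ^ l * Φ)) hy ?_ ?_
        · intro p' hp' q' hq'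
          have e : p * q * (p' * q') = p * p' * (q * q') := by
            rw [mul_assoc p q (p' * q'), ← mul_assoc q p' q', hΦpowcent l q hq p',
              mul_assoc p' q q', ← mul_assoc p p' (q * q')]
          rw [e]
          exact Submodule.mul_mem_mul Submodule.mem_top (Submodule.mul_mem_mul hq hq')
        · intro u v hu hv
          rw [mul_add]
          exact Submodule.add_mem _ hu hv
      · intro u v hu hv
        rw [add_mul]
        exact Submodule.add_mem _ hu hv
  have hΦ1 : Φ ≤ Fil gA 1 := Submodule.span_le.mpr fun s hs => hSφ_Fil s hs
  have hΦFil : ∀ l : ℕ, Φ ^ l ≤ Fil gA (l : ℤ) := by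
    intro l
    induction l with
    | zero =>
      rw [pow_zero]
      intro x hx
      obtain ⟨r, rfl⟩ := Submodule.mem_one.mp hx
      rw [Algebra.algebraMap_eq_smul_one]
      refine Submodule.smul_mem _ r ?_
      exact_mod_cast one_mem_Fil gA
    | succ l ih =>
      rw [pow_succ]
      refine Submodule.mul_le.mpr fun x hx y hy => ?_
      have h := mul_mem_Fil gA (ih hx) (hΦ1 hy)
      have : ((l : ℤ) + 1) = ((l + 1 : ℕ) : ℤ) := by push_cast; ring
      rwa [this] at h
  -- bound below for A
  obtain ⟨sA, hsA⟩ := hfin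
  obtain ⟨bA, hbA0, hbA⟩ := exists_forall_mem_Fil gA sA
  have hφFil1 : ∀ v : V, φ v ∈ Fil gA 1 := by
    intro v
    obtain ⟨s, hs⟩ := sum_compL gV v
    rw [← hs, map_sum]
    refine Submodule.sum_mem _ fun n _ => ?_
    by_cases hn : 1 ≤ n
    · exact g_le_Fil gA hn (hgraded n _ (compL_mem gV n v))
    · have h0 : compL gV n v = 0 := by
        have h := compL_mem gV n v
        rw [hVpos n (by omega)] at h
        simpa using h
      rw [h0, map_zero]
      exact Submodule.zero_mem _
  have hadj : ∀ c ∈ Algebra.adjoin k (Set.range φ), c ∈ Fil gA 0 := by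
    have hle : Algebra.adjoin k (Set.range φ) ≤ FilAlg gA := by
      refine Algebra.adjoin_le ?_
      rintro x ⟨v, rfl⟩
      exact Fil_antitone gA (show (0:ℤ) ≤ 1 by norm_num) (hφFil1 v)
    exact fun c hc => hle hc
  have hA_Fil : ∀ a : A, a ∈ Fil gA bA := by
    intro a
    refine Submodule.span_le.mpr ?_ (hsA a)
    rintro x ⟨c, hc, t, ht, rfl⟩
    have := mul_mem_Fil gA (hadj c hc) (hbA t ht)
    rwa [zero_add] at this
  -- bound below for M
  obtain ⟨sM, hsMhom, hsMspan⟩ := hfg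
  obtain ⟨bM, hbM0, hbM⟩ := exists_forall_mem_Fil gM sM
  have hM_Fil : ∀ m : M, m ∈ Fil gM (bA + bM) := by
    intro m
    have hm : m ∈ Submodule.span A (sM : Set M) := by rw [hsMspan]; exact Submodule.mem_top
    obtain ⟨c, hsupp, rfl⟩ := Submodule.mem_span_set.mp hm
    rw [Finsupp.sum]
    refine Submodule.sum_mem _ fun z hz => ?_
    exact smul_mem_Fil gA gM hsmul (hA_Fil (c z)) (hbM z (hsupp hz))
  -- A ⧸ Ik is finite dimensional
  have hsplit : ∀ a : A, a ∈ (Submodule.span k (sA : Set A)) ⊔ Ik := by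
    intro a
    refine Submodule.span_le.mpr ?_ (hsA a)
    rintro x ⟨c, hc, t, ht, rfl⟩
    have hU : ∀ c' ∈ Algebra.adjoin k (Set.range φ),
        c' ∈ (Submodule.span k {(1 : A)}) ⊔ Ik := by
      set U : Subalgebra k A :=
        { carrier := ((Submodule.span k {(1 : A)}) ⊔ Ik : Submodule k A)
          mul_mem' := by
            intro x y hx hy
            rw [SetLike.mem_coe, Submodule.mem_sup] at hx hy ⊢
            obtain ⟨u, hu, i, hi, rfl⟩ := hx
            obtain ⟨u', hu', i', hi', rfl⟩ := hy
            obtain ⟨r, rfl⟩ := Submodule.mem_span_singleton.mp hu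
            obtain ⟨r', rfl⟩ := Submodule.mem_span_singleton.mp hu'
            refine ⟨(r * r') • 1, Submodule.mem_span_singleton.mpr ⟨r * r', rfl⟩,
              r • i' + r' • i + i * i', ?_, ?_⟩
            · refine Ik.add_mem (Ik.add_mem (Ik.smul_mem r hi') (Ik.smul_mem r' hi)) ?_
              rw [← smul_eq_mul]
              exact I.smul_mem i hi'
            · rw [add_mul, mul_add, mul_add, smul_mul_assoc, smul_mul_assoc, one_mul,
                mul_smul_comm, mul_one, smul_smul]
              rw [one_mul]
              abel
          one_mem' := Submodule.mem_sup_left (Submodule.mem_span_singleton_self 1)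
          add_mem' := by
            intro x y hx hy
            exact Submodule.add_mem _ hx hy
          zero_mem' := Submodule.zero_mem _
          algebraMap_mem' := fun r => by
            rw [Algebra.algebraMap_eq_smul_one]
            exact Submodule.mem_sup_left (Submodule.mem_span_singleton.mpr ⟨r, rfl⟩) } with hUdef
      have hle : Algebra.adjoin k (Set.range φ) ≤ U := by
        refine Algebra.adjoin_le ?_
        rintro x ⟨v, rfl⟩
        exact Submodule.mem_sup_right (hrange v)
      exact fun c' hc' => hle hc'
    have hcU := hU c hc
    rw [Submodule.mem_sup] at hcU
    obtain ⟨u, hu, i, hi, rfl⟩ := hcU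
    obtain ⟨r, rfl⟩ := Submodule.mem_span_singleton.mp hu
    rw [add_mul, smul_mul_assoc, one_mul]
    refine Submodule.add_mem_sup (Submodule.smul_mem _ r (Submodule.subset_span ht)) ?_
    exact hImulright i hi t
  haveI hfinquot : Module.Finite k (A ⧸ Ik) := by
    refine ⟨⟨sA.image Ik.mkQ, le_antisymm le_top ?_⟩⟩
    intro x _
    obtain ⟨a, rfl⟩ := Submodule.mkQ_surjective Ik x
    have h := hsplit a
    rw [Submodule.mem_sup] at h
    obtain ⟨y, hy, i, hi, rfl⟩ := h
    rw [map_add, show Ik.mkQ i = 0 by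
        rwa [Submodule.mkQ_apply, Submodule.Quotient.mk_eq_zero],
      add_zero, Finset.coe_image, ← Submodule.map_span]
    exact Submodule.mem_map_of_mem hy
  haveI hNoeth : IsNoetherian k (A ⧸ Ik) := inferInstance
  haveI hArt : IsArtinian k (A ⧸ Ik) := inferInstance
  have hJmono : ∀ p q : ℕ, p ≤ q → (Jk gA) ^ (q + 1) ≤ (Jk gA) ^ (p + 1) := by
    intro p q hpq
    induction q with
    | zero =>
      have h0 : p = 0 := Nat.le_zero.mp hpq
      subst h0
      exact le_refl _
    | succ q ih =>
      rcases Nat.lt_or_ge p (q + 1) with h | h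
      · exact le_trans (Jpow_antitone gA) (ih (by omega))
      · have h1 : p = q + 1 := by omega
        subst h1
        exact le_refl _
  set f : ℕ →o (Submodule k (A ⧸ Ik))ᵒᵈ :=
    ⟨fun p => (Ik ⊔ (Jk gA) ^ (p + 1)).map Ik.mkQ, by
      intro p q hpq
      exact Submodule.map_mono (sup_le_sup_left (hJmono p q hpq) Ik)⟩ with hfdef
  obtain ⟨n, hn⟩ := IsArtinian.monotone_stabilizes f
  have hmapeq : (Ik ⊔ (Jk gA) ^ (n + 1)).map Ik.mkQ = (Ik ⊔ (Jk gA) ^ (n + 2)).map Ik.mkQ :=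
    hn (n + 1) (Nat.le_succ n)
  have hstab : Ik ⊔ (Jk gA) ^ (n + 1) = Ik ⊔ (Jk gA) ^ (n + 2) := by
    have h1 := congrArg (Submodule.comap Ik.mkQ) hmapeq
    rwa [Submodule.comap_map_eq, Submodule.comap_map_eq, Submodule.ker_mkQ,
      sup_eq_left.mpr le_sup_left, sup_eq_left.mpr le_sup_left] at h1
  have hJI : (Jk gA) ^ (n + 1) ≤ Ik := Jpow_stab_le_I gA hIcc hNoeth hstab
  -- conclusion
  rw [eq_bot_iff]
  intro x hx
  have hxall : ∀ i : ℕ, x ∈ Submodule.span A {y : M |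
      ∃ a ∈ (Submodule.restrictScalars k (gradedRadical gA)) ^ i, ∃ m : M, y = a • m} :=
    fun i => (Submodule.mem_iInf _).mp hx i
  have hcomp : ∀ d : ℤ, compL gM d x = 0 := by
    intro d
    set l : ℕ := (d - 3 * bA - bM + 1).toNat + 1 with hldef
    have hld : d < bA + (bA + (l : ℤ)) + (bA + bM) := by
      have h1 : (d - 3 * bA - bM + 1 : ℤ) ≤ ((d - 3 * bA - bM + 1).toNat : ℤ) :=
        Int.self_le_toNat _
      have h2 : ((l : ℕ) : ℤ) = ((d - 3 * bA - bM + 1).toNat : ℤ) + 1 := by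
        rw [hldef]; push_cast; ring
      omega
    have haFil : ∀ a ∈ (Jk gA) ^ ((n + 1) * l), a ∈ Fil gA (bA + (l : ℤ)) := by
      intro a ha
      have hmono : ∀ (P Q : Submodule k A), P ≤ Q → ∀ m : ℕ, P ^ m ≤ Q ^ m := by
        intro P Q h m
        induction m with
        | zero => rw [pow_zero, pow_zero]
        | succ m ih => rw [pow_succ, pow_succ]; exact mul_le_mul' ih h
      have h1 : (Jk gA) ^ ((n + 1) * l) ≤ Ik ^ l := by
        rw [pow_mul]
        exact hmono _ _ hJI l
      have h2 : Ik ^ l ≤ Fil gA (bA + (l : ℤ)) := by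
        refine le_trans (hIbound l) ?_
        refine Submodule.mul_le.mpr fun p hp q hq => ?_
        exact mul_mem_Fil gA (hA_Fil p) (hΦFil l hq)
      exact h2 (h1 ha)
    have hxFil : x ∈ Fil gM (bA + (bA + (l : ℤ)) + (bA + bM)) := by
      have hx_i := hxall ((n + 1) * l)
      obtain ⟨c, hsupp, rfl⟩ := Submodule.mem_span_set.mp hx_i
      rw [Finsupp.sum]
      refine Submodule.sum_mem _ fun z hz => ?_
      obtain ⟨a, ha, m, rfl⟩ := hsupp hz
      rw [← mul_smul]
      refine smul_mem_Fil gA gM hsmul ?_ (hM_Fil m)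
      exact mul_mem_Fil gA (hA_Fil (c (a • m))) (haFil a ha)
    exact (mem_Fil_iff gM).mp hxFil d hld
  obtain ⟨s, hs⟩ := sum_compL gM x
  rw [← hs]
  exact Finset.sum_eq_zero fun e _ => hcomp e
end

section
/- Let Ā be a finite-dimensional ℤ-graded k-algebra and let M be a graded Ā-module. Then: (a) M is a sum of graded-simple graded submodules if and only if the underlying (ungraded) Ā-module M is semisimple; (b) M is graded-simple (nonzero with only graded submodules 0 and M) if and only if the underlying Ā-module M is simple. -/
open DirectSum

set_option linter.unusedSectionVars false
set_option maxHeartbeats 1000000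

section Aux

open scoped Classical

variable {k A M : Type} [Field k] [Ring A] [Algebra k A]
    [FiniteDimensional k A]
    (gA : ℤ → Submodule k A) [GradedAlgebra gA]
    [AddCommGroup M] [Module A M] [Module k M] [IsScalarTower k A M]
    (gM : ℤ → Submodule k M) [DirectSum.Decomposition gM]

variable (hsmul : ∀ (i j : ℤ), ∀ a ∈ gA i, ∀ m ∈ gM j, a • m ∈ gM (i + j))

/-- projection to degree n -/
noncomputable def prj (n : ℤ) (x : M) : M := (DirectSum.decompose gM x n : M)

lemma smulCommClass_kAM : SMulCommClass k A M := by
  constructor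
  intro c a x
  rw [← smul_one_smul A c x, ← mul_smul, ← smul_one_smul A c (a • x), ← mul_smul,
    Algebra.mul_smul_comm, Algebra.smul_mul_assoc, mul_one, one_mul]

lemma prj_mem (n : ℤ) (x : M) : prj gM n x ∈ gM n := (DirectSum.decompose gM x n).2

lemma prj_add (n : ℤ) (x y : M) : prj gM n (x + y) = prj gM n x + prj gM n y := by
  unfold prj; rw [DirectSum.decompose_add]; rfl

lemma prj_zero (n : ℤ) : prj gM n (0 : M) = 0 := by
  unfold prj; rw [DirectSum.decompose_zero]; rfl

lemma prj_smul_k (n : ℤ) (c : k) (x : M) : prj gM n (c • x) = c • prj gM n x := by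
  unfold prj; rw [DirectSum.decompose_smul]; rfl

lemma prj_of_mem_same {n : ℤ} {x : M} (h : x ∈ gM n) : prj gM n x = x :=
  DirectSum.decompose_of_mem_same gM h

lemma prj_of_mem_ne {n m : ℤ} {x : M} (h : x ∈ gM n) (hne : m ≠ n) : prj gM m x = 0 :=
  DirectSum.decompose_of_mem_ne gM h hne.symm

/-- support of an element -/
noncomputable def supp (x : M) : Finset ℤ := (DirectSum.decompose gM x).support

lemma prj_eq_zero_of_not_mem_supp {x : M} {n : ℤ} (h : n ∉ supp gM x) : prj gM n x = 0 := by
  unfold supp at h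
  rw [DFinsupp.notMem_support_iff] at h
  unfold prj
  rw [h]; rfl

lemma sum_supp_prj (s : Finset ℤ) (x : M) (h : supp gM x ⊆ s) :
    ∑ n ∈ s, prj gM n x = x := by
  rw [← Finset.sum_subset h (fun n _ hn => prj_eq_zero_of_not_mem_supp gM hn)]
  exact DirectSum.sum_support_decompose gM x

lemma supp_subset_singleton {x : M} {n : ℤ} (h : x ∈ gM n) : supp gM x ⊆ {n} := by
  intro m hm
  rcases eq_or_ne m n with rfl | hne
  · exact Finset.mem_singleton_self _
  · exact absurd (prj_of_mem_ne gM h hne) (by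
      unfold supp at hm
      rw [DFinsupp.mem_support_iff] at hm
      intro hc
      exact hm (Subtype.ext hc))


/-- homogeneous decomposition of the algebra: sum of components -/
lemma sum_supp_prjA (a : A) : ∑ e ∈ (DirectSum.decompose gA a).support,
    ((DirectSum.decompose gA a e : gA e) : A) = a :=
  DirectSum.sum_support_decompose gA a

include hsmul in
/-- `prj (e+m) (a • x) = a • prj m x` for homogeneous `a` of degree `e`. -/
lemma prj_smul_homog {e : ℤ} {a : A} (ha : a ∈ gA e) (m : ℤ) (x : M) :
    prj gM (e + m) (a • x) = a • prj gM m x := by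
  haveI : SMulCommClass k A M := smulCommClass_kAM
  induction x using DirectSum.Decomposition.inductionOn gM with
  | zero => rw [smul_zero, prj_zero, prj_zero, smul_zero]
  | @homogeneous j y =>
    have hy : (y : M) ∈ gM j := y.2
    have hay : a • (y : M) ∈ gM (e + j) := hsmul e j a ha y hy
    rcases eq_or_ne m j with rfl | hne
    · rw [prj_of_mem_same gM hay, prj_of_mem_same gM hy]
    · rw [prj_of_mem_ne gM hay (by omega), prj_of_mem_ne gM hy hne, smul_zero]
  | add y z hy hz =>
    rw [smul_add, prj_add, prj_add, hy, hz, smul_add]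

include hsmul in
lemma prj_smul_homog' {e : ℤ} {a : A} (ha : a ∈ gA e) (m : ℤ) (x : M) :
    prj gM m (a • x) = a • prj gM (m - e) x := by
  have := prj_smul_homog gA gM hsmul ha (m - e) x
  rwa [show e + (m - e) = m by ring] at this

lemma prj_sum {ι' : Type*} (m : ℤ) (s : Finset ι') (f : ι' → M) :
    prj gM m (∑ i ∈ s, f i) = ∑ i ∈ s, prj gM m (f i) := by
  classical
  induction s using Finset.induction with
  | empty => simp [prj_zero]
  | insert _ _ hni ih => rw [Finset.sum_insert hni, Finset.sum_insert hni, prj_add, ih]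

include hsmul in
lemma prj_smul_mem {N : Submodule A M} (a : A) {x : M}
    (hx : ∀ n, prj gM n x ∈ N) (m : ℤ) : prj gM m (a • x) ∈ N := by
  have ha : a • x = ∑ e ∈ (DirectSum.decompose gA a).support,
      ((DirectSum.decompose gA a e : gA e) : A) • x := by
    conv_lhs => rw [← sum_supp_prjA gA a]
    rw [Finset.sum_smul]
  rw [ha, prj_sum]
  apply Submodule.sum_mem
  intro e _
  rw [prj_smul_homog' gA gM hsmul (DirectSum.decompose gA a e).2 m x]
  exact N.smul_mem _ (hx _)

include gA hsmul in
/-- characterization of graded submodules: closed under taking components -/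
lemma isGraded_iff (N : Submodule A M) :
    IsGradedSubmodule gM N ↔ ∀ x ∈ N, ∀ n, prj gM n x ∈ N := by
  constructor
  · intro hN x hx
    rw [hN] at hx
    suffices h : ∀ n, prj gM n x ∈ N by exact h
    induction hx using Submodule.span_induction with
    | mem z hz =>
      intro n
      obtain ⟨_, ⟨j, rfl⟩, hzN, hzj⟩ := hz
      rcases eq_or_ne n j with rfl | hne
      · rw [prj_of_mem_same gM hzj]
        exact hzN
      · rw [prj_of_mem_ne gM hzj hne]; exact Submodule.zero_mem _
    | zero => intro n; rw [prj_zero]; exact Submodule.zero_mem _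
    | add y z _ _ hy hz => intro n; rw [prj_add]; exact Submodule.add_mem _ (hy n) (hz n)
    | smul a z hz ihz =>
      intro n
      exact prj_smul_mem gA gM hsmul a ihz n
  · intro h
    apply le_antisymm
    · intro x hx
      rw [← sum_supp_prj gM (supp gM x) x (le_refl _)]
      apply Submodule.sum_mem
      intro n _
      apply Submodule.subset_span
      exact ⟨_, ⟨n, rfl⟩, h x hx n, prj_mem gM n x⟩
    · rw [Submodule.span_le]
      rintro z ⟨_, ⟨j, rfl⟩, hzN, _⟩
      exact hzN


include gA hsmul in
lemma isGraded_top : IsGradedSubmodule gM (⊤ : Submodule A M) := by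
  rw [isGraded_iff gA gM hsmul]
  intro _ _ _; trivial

include gA hsmul in
lemma isGraded_bot : IsGradedSubmodule gM (⊥ : Submodule A M) := by
  rw [isGraded_iff gA gM hsmul]
  intro x hx n
  rw [Submodule.mem_bot] at hx
  subst hx
  rw [prj_zero]
  exact Submodule.zero_mem _

include gA hsmul in
lemma isGraded_inf {N P : Submodule A M} (hN : IsGradedSubmodule gM N)
    (hP : IsGradedSubmodule gM P) : IsGradedSubmodule gM (N ⊓ P) := by
  rw [isGraded_iff gA gM hsmul] at *
  intro x hx n
  exact ⟨hN x hx.1 n, hP x hx.2 n⟩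

include gA hsmul in
lemma isGraded_sSup {S : Set (Submodule A M)} (hS : ∀ N ∈ S, IsGradedSubmodule gM N) :
    IsGradedSubmodule gM (sSup S) := by
  rw [isGraded_iff gA gM hsmul]
  intro x hx n
  rw [sSup_eq_iSup'] at hx ⊢
  induction hx using Submodule.iSup_induction' with
  | mem N z hz =>
    exact Submodule.mem_iSup_of_mem N (((isGraded_iff gA gM hsmul _).1 (hS N N.2)) z hz n)
  | zero => rw [prj_zero]; exact Submodule.zero_mem _
  | add y z _ _ hy hz => rw [prj_add]; exact Submodule.add_mem _ hy hz

include gA hsmul in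
/-- the cyclic module generated by a homogeneous element is graded -/
lemma isGraded_span_singleton {d : ℤ} {m : M} (hm : m ∈ gM d) :
    IsGradedSubmodule gM (Submodule.span A {m}) := by
  rw [isGraded_iff gA gM hsmul]
  intro x hx n
  rw [Submodule.mem_span_singleton] at hx
  obtain ⟨a, rfl⟩ := hx
  apply prj_smul_mem gA gM hsmul
  intro j
  rcases eq_or_ne j d with rfl | hne
  · rw [prj_of_mem_same gM hm]
    exact Submodule.mem_span_singleton_self m
  · rw [prj_of_mem_ne gM hm hne]
    exact Submodule.zero_mem _

include gA hsmul in
/-- a nonzero graded submodule contains a nonzero homogeneous element -/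
lemma exists_homog_of_ne_bot {N : Submodule A M} (hN : IsGradedSubmodule gM N)
    (hbot : N ≠ ⊥) : ∃ m ∈ N, m ≠ 0 ∧ ∃ d, m ∈ gM d := by
  obtain ⟨x, hxN, hx0⟩ := Submodule.exists_mem_ne_zero_of_ne_bot hbot
  have : ∃ n, prj gM n x ≠ 0 := by
    by_contra hc
    push_neg at hc
    apply hx0
    rw [← sum_supp_prj gM (supp gM x) x (le_refl _)]
    exact Finset.sum_eq_zero fun n _ => hc n
  obtain ⟨n, hn⟩ := this
  exact ⟨prj gM n x, (isGraded_iff gA gM hsmul N).1 hN x hxN n, hn, n, prj_mem gM n x⟩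

/-- `a ↦ a • m` as a `k`-linear map -/
def tau (m : M) : A →ₗ[k] M where
  toFun a := a • m
  map_add' a b := add_smul a b m
  map_smul' c a := by simp only [RingHom.id_apply]; rw [smul_assoc]

/-- the k-submodule underlying `span A {m}` is the range of `a ↦ a • m` -/
lemma restrictScalars_span_singleton (m : M) :
    (Submodule.span A {m}).restrictScalars k = LinearMap.range (tau (k := k) (A := A) (M := M) m) := by
  apply SetLike.ext
  intro x
  simp only [Submodule.restrictScalars_mem, Submodule.mem_span_singleton,
    LinearMap.mem_range]
  constructor
  · rintro ⟨a, rfl⟩; exact ⟨a, rfl⟩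
  · rintro ⟨a, rfl⟩; exact ⟨a, rfl⟩

instance fd_span_singleton (m : M) :
    FiniteDimensional k ((Submodule.span A {m}).restrictScalars k) := by
  rw [restrictScalars_span_singleton (k := k) m]
  infer_instance


end Aux

section Helpers

variable {k W : Type} [Field k] [AddCommGroup W] [Module k W]

/-- dimension comparison helpers, ambient module possibly infinite-dimensional -/
lemma finrank_le_of_le {U V : Submodule k W} [FiniteDimensional k V] (h : U ≤ V) :
    Module.finrank k U ≤ Module.finrank k V := by
  rw [← LinearEquiv.finrank_eq (Submodule.comapSubtypeEquivOfLe h)]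
  exact Submodule.finrank_le _

lemma finrank_lt_of_lt {U V : Submodule k W} [FiniteDimensional k V] (h : U < V) :
    Module.finrank k U < Module.finrank k V := by
  rw [← LinearEquiv.finrank_eq (Submodule.comapSubtypeEquivOfLe h.le)]
  apply Submodule.finrank_lt
  refine (fun hc => ?_)
  rw [Submodule.comap_subtype_eq_top] at hc
  exact h.not_ge hc

lemma eq_of_le_of_finrank_le' {U V : Submodule k W} [FiniteDimensional k V] (h : U ≤ V)
    (hr : Module.finrank k V ≤ Module.finrank k U) : U = V := by
  rcases h.lt_or_eq with hlt | heq
  · exact absurd hr (finrank_lt_of_lt hlt).not_ge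
  · exact heq

lemma bot_lt_of_ne_bot {U : Submodule k W} (h : U ≠ ⊥) : (⊥ : Submodule k W) < U :=
  bot_lt_iff_ne_bot.2 h

lemma ne_bot_of_finrank_pos' {U : Submodule k W} (h : 0 < Module.finrank k U) : U ≠ ⊥ := by
  intro hc
  rw [hc] at h
  simp [finrank_bot] at h

lemma finrank_pos_of_ne_bot {U : Submodule k W} [FiniteDimensional k U] (h : U ≠ ⊥) :
    0 < Module.finrank k U := by
  have := finrank_lt_of_lt (bot_lt_of_ne_bot h)
  simpa [finrank_bot] using this

end Helpers

section Aux2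

open scoped Classical

variable {k A M : Type} [Field k] [Ring A] [Algebra k A]
    [FiniteDimensional k A]
    (gA : ℤ → Submodule k A) [GradedAlgebra gA]
    [AddCommGroup M] [Module A M] [Module k M] [IsScalarTower k A M]
    (gM : ℤ → Submodule k M) [DirectSum.Decomposition gM]

variable (hsmul : ∀ (i j : ℤ), ∀ a ∈ gA i, ∀ m ∈ gM j, a • m ∈ gM (i + j))

lemma prj_ne_zero_of_mem_supp {x : M} {n : ℤ} (h : n ∈ supp gM x) : prj gM n x ≠ 0 := by
  unfold supp at h
  rw [DFinsupp.mem_support_iff] at h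
  intro hc
  exact h (Subtype.ext hc)

include hsmul in
/-- values of projections of `a • m` for homogeneous `m`. -/
lemma prj_smul_homog_elt {d : ℤ} {m : M} (hm : m ∈ gM d) (a : A) (n : ℤ) :
    prj gM n (a • m) = ((DirectSum.decompose gA a (n - d) : gA (n - d)) : A) • m := by
  conv_lhs => rw [← sum_supp_prjA gA a, Finset.sum_smul, prj_sum]
  rw [Finset.sum_eq_single (n - d)]
  · exact prj_of_mem_same gM (by
      have := hsmul (n - d) d _ (DirectSum.decompose gA a (n - d)).2 m hm
      rwa [show n - d + d = n by ring] at this)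
  · intro e he hne
    refine prj_of_mem_ne gM (hsmul e d _ (DirectSum.decompose gA a e).2 m hm) (by omega)
  · intro hns
    rw [DFinsupp.notMem_support_iff] at hns
    rw [hns]
    simp [prj_zero]

/-- only finitely many degrees meet a finite-dimensional submodule nontrivially -/
lemma finite_degrees_inf (K : Submodule k M) [FiniteDimensional k K] :
    {n : ℤ | K ⊓ gM n ≠ ⊥}.Finite := by
  classical
  set p : ℤ → Submodule k K := fun n => (gM n).comap K.subtype with hp
  have hind : iSupIndep p := by
    have hgm : iSupIndep gM := (Decomposition.isInternal gM).submodule_iSupIndep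
    intro n
    have hd := hgm n
    rw [disjoint_iff] at hd ⊢
    have h1 : (⨆ j, ⨆ _ : j ≠ n, p j) ≤ (⨆ j, ⨆ _ : j ≠ n, gM j).comap K.subtype :=
      iSup₂_le fun j hj => Submodule.comap_mono (le_iSup₂ (f := fun j (_ : j ≠ n) => gM j) j hj)
    refine le_bot_iff.1 ?_
    calc p n ⊓ (⨆ j, ⨆ _ : j ≠ n, p j)
        ≤ (gM n).comap K.subtype ⊓ (⨆ j, ⨆ _ : j ≠ n, gM j).comap K.subtype :=
          inf_le_inf (le_refl _) h1
      _ = ((gM n) ⊓ (⨆ j, ⨆ _ : j ≠ n, gM j)).comap K.subtype := (Submodule.comap_inf _ _ _).symm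
      _ = (⊥ : Submodule k M).comap K.subtype := by rw [hd]
      _ = ⊥ := by rw [Submodule.comap_bot, Submodule.ker_subtype]
  have hfin : Finite {i : ℤ // p i ≠ ⊥} := ⟨(hind.fintypeNeBotOfFiniteDimensional).equivFin⟩
  have hfin2 : {n : ℤ | p n ≠ ⊥}.Finite := Set.finite_coe_iff.1 hfin
  apply hfin2.subset
  intro n hn
  obtain ⟨x, hx, hx0⟩ := Submodule.exists_mem_ne_zero_of_ne_bot hn
  refine Submodule.ne_bot_iff _ |>.2 ⟨⟨x, hx.1⟩, hx.2, ?_⟩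
  intro hc
  exact hx0 (congrArg Subtype.val hc)

include gA hsmul in
/-- a graded submodule inside a finite-dimensional `K` cannot have support along an
infinite arithmetic progression -/
lemma no_infinite_progression (K : Submodule k M) [FiniteDimensional k K]
    (n₀ δ : ℤ) (hδ : δ ≠ 0) (h : ∀ t : ℕ, K ⊓ gM (n₀ + t * δ) ≠ ⊥) : False := by
  have hfin := finite_degrees_inf gM K
  refine Set.infinite_of_injective_forall_mem (f := fun t : ℕ => n₀ + t * δ)
    (fun t t' htt => ?_) (fun t => h t) hfin
  have h2 : (t : ℤ) * δ = (t' : ℤ) * δ := by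
    have := htt
    simp only at this
    omega
  have := mul_right_cancel₀ hδ h2
  exact_mod_cast this


include gA hsmul in
/-- a nonzero homogeneous element of a graded-simple module generates it -/
lemma span_homog_eq {N : Submodule A M} (hg : IsGradedSubmodule gM N) (hbot : N ≠ ⊥)
    (hsimp : ∀ N' : Submodule A M, IsGradedSubmodule gM N' → N' ≤ N → N' = ⊥ ∨ N' = N)
    {d : ℤ} {m : M} (hmd : m ∈ gM d) (hmN : m ∈ N) (hm0 : m ≠ 0) :
    Submodule.span A {m} = N := by
  rcases hsimp _ (isGraded_span_singleton gA gM hsmul hmd)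
    ((Submodule.span_le).2 (by simpa using hmN)) with h | h
  · exfalso; exact hm0 (Submodule.span_eq_bot.1 h m rfl)
  · exact h

include gA hsmul in
/-- **Key lemma**: a graded-simple submodule is simple as an abstract submodule. -/
lemma key_atom {N : Submodule A M} (hg : IsGradedSubmodule gM N) (hbot : N ≠ ⊥)
    (hsimp : ∀ N' : Submodule A M, IsGradedSubmodule gM N' → N' ≤ N → N' = ⊥ ∨ N' = N) :
    ∀ P : Submodule A M, P ≤ N → P = ⊥ ∨ P = N := by
  intro P hPN
  by_contra hc
  push_neg at hc
  obtain ⟨hPbot, hPne⟩ := hc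
  -- choose a nonzero element of `P` with minimal number of homogeneous components
  classical
  set C := {c : ℕ | ∃ x ∈ P, x ≠ 0 ∧ (supp gM x).card = c} with hC
  have hCne : C.Nonempty := by
    obtain ⟨x, hxP, hx0⟩ := Submodule.exists_mem_ne_zero_of_ne_bot hPbot
    exact ⟨_, x, hxP, hx0, rfl⟩
  obtain ⟨x, hxP, hx0, hxcard⟩ := Nat.sInf_mem hCne
  have hmin : ∀ y ∈ P, y ≠ 0 → sInf C ≤ (supp gM y).card := fun y hy hy0 =>
    Nat.sInf_le ⟨y, hy, hy0, rfl⟩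
  have hxN : x ∈ N := hPN hxP
  have hsupp_ne : (supp gM x).Nonempty := by
    rcases Finset.eq_empty_or_nonempty (supp gM x) with he | h
    · exact absurd ((sum_supp_prj gM _ x (le_refl _)).symm.trans (by rw [he]; simp)) hx0
    · exact h
  rcases eq_or_lt_of_le (Finset.one_le_card.2 hsupp_ne) with hone | htwo
  · -- x is homogeneous: P = N, contradiction
    obtain ⟨d, hd⟩ := Finset.card_eq_one.1 hone.symm
    have hxd : x ∈ gM d := by
      have := sum_supp_prj gM _ x (le_refl _)
      rw [hd, Finset.sum_singleton] at this
      rw [← this]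
      exact prj_mem gM d x
    have := span_homog_eq gA gM hsmul hg hbot hsimp hxd hxN hx0
    apply hPne
    refine le_antisymm hPN ?_
    rw [← this]
    exact (Submodule.span_le).2 (by simpa using hxP)
  · -- at least two components
    set d1 := (supp gM x).min' hsupp_ne with hd1
    set ds := (supp gM x).max' hsupp_ne with hds
    have hd1ds : d1 < ds := Finset.min'_lt_max'_of_card _ htwo
    set x1 := prj gM d1 x with hx1
    set xs := prj gM ds x with hxs
    have hx1N : x1 ∈ N := (isGraded_iff gA gM hsmul N).1 hg x hxN d1
    have hxsN : xs ∈ N := (isGraded_iff gA gM hsmul N).1 hg x hxN ds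
    have hx10 : x1 ≠ 0 := prj_ne_zero_of_mem_supp gM (Finset.min'_mem _ _)
    have hxs0 : xs ≠ 0 := prj_ne_zero_of_mem_supp gM (Finset.max'_mem _ _)
    have hspan1 : Submodule.span A {x1} = N :=
      span_homog_eq gA gM hsmul hg hbot hsimp (prj_mem gM d1 x) hx1N hx10
    have hspans : Submodule.span A {xs} = N :=
      span_homog_eq gA gM hsmul hg hbot hsimp (prj_mem gM ds x) hxsN hxs0
    -- a homogeneous element killing x1 kills xs
    have homkill : ∀ (e : ℤ) (a : A), a ∈ gA e → a • x1 = 0 → a • xs = 0 := by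
      intro e a hae h1
      have hy : ∀ m : ℤ, prj gM m (a • x) = a • prj gM (m - e) x :=
        fun m => prj_smul_homog' gA gM hsmul hae m x
      have hzero : a • x = 0 := by
        by_contra hy0
        have hsub : supp gM (a • x) ⊆
            ((supp gM x).image (fun n => e + n)) \ {e + d1} := by
          intro m hm
          have hm0 := prj_ne_zero_of_mem_supp gM hm
          rw [hy m] at hm0
          have hmse : m - e ∈ supp gM x := by
            by_contra hns
            rw [prj_eq_zero_of_not_mem_supp gM hns, smul_zero] at hm0
            exact hm0 rfl
          rw [Finset.mem_sdiff, Finset.mem_image]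
          refine ⟨⟨m - e, hmse, by ring⟩, ?_⟩
          rw [Finset.mem_singleton]
          intro hme
          have : m - e = d1 := by omega
          rw [this] at hm0
          exact hm0 h1
        have hcard : (supp gM (a • x)).card < sInf C := by
          have h1' : (e + d1) ∈ (supp gM x).image (fun n => e + n) :=
            Finset.mem_image.2 ⟨d1, Finset.min'_mem _ _, rfl⟩
          have := Finset.card_le_card hsub
          rw [Finset.card_sdiff_of_subset (by simpa using h1')] at this
          have himg : ((supp gM x).image (fun n => e + n)).card ≤ (supp gM x).card :=
            Finset.card_image_le
          simp only [Finset.card_singleton] at this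
          omega
        exact absurd (hmin _ (P.smul_mem a hxP) hy0) (by omega)
      have := hy (e + ds)
      rw [hzero, prj_zero, show e + ds - e = ds by ring] at this
      exact this.symm
    -- dimension comparison
    have hNfd : FiniteDimensional k (N.restrictScalars k) := by
      rw [← hspan1]; exact fd_span_singleton x1
    set Vn : ℤ → Submodule k M := fun n => N.restrictScalars k ⊓ gM n with hVn
    have hVfd : ∀ n, FiniteDimensional k (Vn n) :=
      fun n => Submodule.finiteDimensional_of_le inf_le_left
    set δ := ds - d1 with hδ
    -- image descriptions
    have himg1 : ∀ n : ℤ, Submodule.map (tau (k := k) x1) (gA (n - d1)) = Vn n := by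
      intro n
      apply le_antisymm
      · rintro _ ⟨a, ha, rfl⟩
        constructor
        · exact N.smul_mem a hx1N
        · have := hsmul (n - d1) d1 a ha x1 (prj_mem gM d1 x)
          rwa [show n - d1 + d1 = n by ring] at this
      · rintro y ⟨hyN, hyn⟩
        have hy' : y ∈ Submodule.span A {x1} := by rw [hspan1]; exact hyN
        obtain ⟨a, rfl⟩ := Submodule.mem_span_singleton.1 hy'
        have : prj gM n (a • x1) = a • x1 := prj_of_mem_same gM hyn
        rw [prj_smul_homog_elt gA gM hsmul (prj_mem gM d1 x) a n] at this
        rw [← this]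
        exact ⟨_, (DirectSum.decompose gA a (n - d1)).2, rfl⟩
    have himgs : ∀ n : ℤ, Submodule.map (tau (k := k) xs) (gA (n - d1)) = Vn (n + δ) := by
      intro n
      apply le_antisymm
      · rintro _ ⟨a, ha, rfl⟩
        constructor
        · exact N.smul_mem a hxsN
        · have := hsmul (n - d1) ds a ha xs (prj_mem gM ds x)
          rwa [show n - d1 + ds = n + δ by omega] at this
      · rintro y ⟨hyN, hyn⟩
        have hy' : y ∈ Submodule.span A {xs} := by rw [hspans]; exact hyN
        obtain ⟨a, rfl⟩ := Submodule.mem_span_singleton.1 hy'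
        have : prj gM (n + δ) (a • xs) = a • xs := prj_of_mem_same gM hyn
        rw [prj_smul_homog_elt gA gM hsmul (prj_mem gM ds x) a (n + δ),
          show n + δ - ds = n - d1 by omega] at this
        rw [← this]
        exact ⟨_, (DirectSum.decompose gA a (n - d1)).2, rfl⟩
    -- rank comparison
    have hrank : ∀ n : ℤ, Module.finrank k (Vn (n + δ)) ≤ Module.finrank k (Vn n) := by
      intro n
      set U := gA (n - d1) with hU
      set T1 := (tau (k := k) (A := A) (M := M) x1).domRestrict U with hT1
      set Ts := (tau (k := k) (A := A) (M := M) xs).domRestrict U with hTs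
      have e1 := LinearMap.finrank_range_add_finrank_ker T1
      have es := LinearMap.finrank_range_add_finrank_ker Ts
      rw [LinearMap.range_domRestrict] at e1 es
      rw [himg1 n] at e1
      rw [himgs n] at es
      have hker : LinearMap.ker T1 ≤ LinearMap.ker Ts := by
        rintro ⟨a, haU⟩ hk
        rw [LinearMap.mem_ker] at hk ⊢
        exact homkill (n - d1) a haU hk
      have := finrank_le_of_le hker
      omega
    -- propagate nontriviality downward
    have hprop : ∀ t : ℕ, Vn (d1 - t * δ) ≠ ⊥ := by
      intro t
      induction t with
      | zero =>
        refine (Submodule.ne_bot_iff _).2 ⟨x1, ⟨hx1N, by simpa using prj_mem gM d1 x⟩, hx10⟩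
      | succ t ih =>
        have hstep := hrank (d1 - (t + 1 : ℕ) * δ)
        rw [show d1 - (t + 1 : ℕ) * δ + δ = d1 - t * δ by push_cast; ring] at hstep
        have hpos : 0 < Module.finrank k (Vn (d1 - t * δ)) := finrank_pos_of_ne_bot ih
        exact ne_bot_of_finrank_pos' (by omega)
    -- contradiction with finite support
    refine no_infinite_progression gA gM hsmul (N.restrictScalars k) d1 (-δ)
      (by omega) (fun t => ?_)
    rw [show d1 + (t : ℤ) * (-δ) = d1 - t * δ by ring]
    exact hprop t


/-- the degree-`δ` component of an `A`-linear endomorphism -/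
noncomputable def fdel (f : M →ₗ[A] M) (δ : ℤ) (x : M) : M :=
  ∑ n ∈ supp gM x, prj gM (n + δ) (f (prj gM n x))

lemma fdel_eq_sum (f : M →ₗ[A] M) (δ : ℤ) (x : M) (s : Finset ℤ) (hs : supp gM x ⊆ s) :
    fdel gM f δ x = ∑ n ∈ s, prj gM (n + δ) (f (prj gM n x)) := by
  refine Finset.sum_subset hs (fun n _ hn => ?_)
  rw [prj_eq_zero_of_not_mem_supp gM hn, map_zero, prj_zero]

lemma fdel_zero (f : M →ₗ[A] M) (δ : ℤ) : fdel gM f δ (0 : M) = 0 := by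
  rw [fdel_eq_sum gM f δ 0 ∅ ?_]
  · simp
  · intro n hn
    exact absurd (prj_zero gM n) (prj_ne_zero_of_mem_supp gM hn)

lemma fdel_add (f : M →ₗ[A] M) (δ : ℤ) (x y : M) :
    fdel gM f δ (x + y) = fdel gM f δ x + fdel gM f δ y := by
  rw [fdel_eq_sum gM f δ x (supp gM x ∪ supp gM y ∪ supp gM (x + y)) (by intro n h; simp [h]),
    fdel_eq_sum gM f δ y (supp gM x ∪ supp gM y ∪ supp gM (x + y)) (by intro n h; simp [h]),
    fdel_eq_sum gM f δ (x + y) (supp gM x ∪ supp gM y ∪ supp gM (x + y)) (by intro n h; simp [h]),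
    ← Finset.sum_add_distrib]
  apply Finset.sum_congr rfl
  intro n _
  rw [prj_add, map_add, prj_add]

lemma fdel_sum {ι' : Type*} (f : M →ₗ[A] M) (δ : ℤ) (s : Finset ι') (g : ι' → M) :
    fdel gM f δ (∑ i ∈ s, g i) = ∑ i ∈ s, fdel gM f δ (g i) := by
  classical
  induction s using Finset.induction with
  | empty => simp [fdel_zero]
  | insert _ _ hni ih =>
    rw [Finset.sum_insert hni, Finset.sum_insert hni, fdel_add, ih]

lemma fdel_smul_k (f : M →ₗ[A] M) (δ : ℤ) (c : k) (x : M) :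
    fdel gM f δ (c • x) = c • fdel gM f δ x := by
  have hfk : ∀ (c : k) (z : M), f (c • z) = c • f z := by
    intro c z
    rw [← smul_one_smul A c z, map_smul, smul_one_smul]
  rw [fdel_eq_sum gM f δ x (supp gM x ∪ supp gM (c • x)) (by intro n h; simp [h]),
    fdel_eq_sum gM f δ (c • x) (supp gM x ∪ supp gM (c • x)) (by intro n h; simp [h]),
    Finset.smul_sum]
  apply Finset.sum_congr rfl
  intro n _
  rw [prj_smul_k, hfk, prj_smul_k]

lemma fdel_homog (f : M →ₗ[A] M) (δ : ℤ) {n : ℤ} {x : M} (hx : x ∈ gM n) :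
    fdel gM f δ x = prj gM (n + δ) (f x) := by
  rw [fdel_eq_sum gM f δ x {n} (supp_subset_singleton gM hx), Finset.sum_singleton,
    prj_of_mem_same gM hx]

include gA hsmul in
lemma fdel_smul_A (f : M →ₗ[A] M) (δ : ℤ) (a : A) (x : M) :
    fdel gM f δ (a • x) = a • fdel gM f δ x := by
  induction x using DirectSum.Decomposition.inductionOn gM with
  | zero => rw [smul_zero, fdel_zero, smul_zero]
  | @homogeneous j y =>
    have hy : (y : M) ∈ gM j := y.2
    have hax : a • (y : M) = ∑ e ∈ (DirectSum.decompose gA a).support,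
        ((DirectSum.decompose gA a e : gA e) : A) • (y : M) := by
      conv_lhs => rw [← sum_supp_prjA gA a]
      rw [Finset.sum_smul]
    rw [hax, fdel_sum]
    have hterm : ∀ e ∈ (DirectSum.decompose gA a).support,
        fdel gM f δ (((DirectSum.decompose gA a e : gA e) : A) • (y : M)) =
        ((DirectSum.decompose gA a e : gA e) : A) • prj gM (j + δ) (f y) := by
      intro e _
      have hmem : ((DirectSum.decompose gA a e : gA e) : A) • (y : M) ∈ gM (e + j) :=
        hsmul e j _ (DirectSum.decompose gA a e).2 _ hy
      rw [fdel_homog gM f δ hmem, map_smul,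
        show e + j + δ = e + (j + δ) by ring,
        prj_smul_homog gA gM hsmul (DirectSum.decompose gA a e).2 (j + δ) (f y)]
    rw [Finset.sum_congr rfl hterm, ← Finset.sum_smul, sum_supp_prjA gA a,
      fdel_homog gM f δ hy]
  | add y z hy hz =>
    rw [smul_add, fdel_add, hy, hz, fdel_add, smul_add]

include gA hsmul in
/-- the degree-`δ` component as an `A`-linear map -/
noncomputable def Fdel (f : M →ₗ[A] M) (δ : ℤ) : M →ₗ[A] M where
  toFun := fdel gM f δ
  map_add' := fdel_add gM f δ
  map_smul' a x := by
    simp only [RingHom.id_apply]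
    exact fdel_smul_A gA gM hsmul f δ a x

lemma Fdel_apply (f : M →ₗ[A] M) (δ : ℤ) (x : M) :
    Fdel gA gM hsmul f δ x = fdel gM f δ x := rfl

lemma fdel_prj (f : M →ₗ[A] M) (δ m : ℤ) (x : M) :
    prj gM m (fdel gM f δ x) = fdel gM f δ (prj gM (m - δ) x) := by
  induction x using DirectSum.Decomposition.inductionOn gM with
  | zero => rw [fdel_zero, prj_zero, prj_zero, fdel_zero]
  | @homogeneous j y =>
    have hy : (y : M) ∈ gM j := y.2
    rw [fdel_homog gM f δ hy]
    rcases eq_or_ne m (j + δ) with rfl | hne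
    · rw [prj_of_mem_same gM (prj_mem gM (j + δ) (f y)),
        show j + δ - δ = j by ring, prj_of_mem_same gM hy, fdel_homog gM f δ hy]
    · rw [prj_of_mem_ne gM (prj_mem gM (j + δ) (f y)) hne,
        prj_of_mem_ne gM hy (by omega), fdel_zero]
  | add y z hy hz =>
    rw [fdel_add, prj_add, prj_add, fdel_add, hy, hz]

/-- any `A`-linear endomorphism is a (finite) sum of its degree components -/
lemma exists_sum_fdel (f : M →ₗ[A] M) (x : M) :
    ∃ s : Finset ℤ, f x = ∑ δ ∈ s, fdel gM f δ x := by
  classical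
  set t := supp gM x with ht
  set u := t.biUnion (fun n => supp gM (f (prj gM n x))) with hu
  set s := (u ×ˢ t).image (fun p => p.1 - p.2) with hs
  refine ⟨s, ?_⟩
  have hstep : ∀ δ ∈ s, fdel gM f δ x = ∑ n ∈ t, prj gM (n + δ) (f (prj gM n x)) :=
    fun δ _ => fdel_eq_sum gM f δ x t (le_refl _)
  rw [Finset.sum_congr rfl hstep, Finset.sum_comm]
  have hinner : ∀ n ∈ t, ∑ δ ∈ s, prj gM (n + δ) (f (prj gM n x)) = f (prj gM n x) := by
    intro n hn
    set y := f (prj gM n x) with hy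
    have himg : ∑ m ∈ s.image (fun δ => n + δ), prj gM m y = ∑ δ ∈ s, prj gM (n + δ) y :=
      Finset.sum_image (fun a _ b _ h => by omega)
    rw [← himg]
    apply sum_supp_prj
    intro m hm
    have hmu : m ∈ u := Finset.mem_biUnion.2 ⟨n, hn, hm⟩
    refine Finset.mem_image.2 ⟨m - n, ?_, by ring⟩
    exact Finset.mem_image.2 ⟨(m, n), Finset.mem_product.2 ⟨hmu, hn⟩, rfl⟩
  rw [Finset.sum_congr rfl hinner, ← map_sum, sum_supp_prj gM t x (le_refl _)]


include gA hsmul in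
lemma isGraded_map_fdel {V : Submodule A M} (hV : IsGradedSubmodule gM V)
    (f : M →ₗ[A] M) (δ : ℤ) :
    IsGradedSubmodule gM (Submodule.map (Fdel gA gM hsmul f δ) V) := by
  rw [isGraded_iff gA gM hsmul]
  rintro _ ⟨x, hxV, rfl⟩ m
  rw [Fdel_apply, fdel_prj gM f δ m x, ← Fdel_apply gA gM hsmul]
  exact ⟨prj gM (m - δ) x, (isGraded_iff gA gM hsmul V).1 hV x hxV (m - δ), rfl⟩

include gA hsmul in
/-- If `M` is semisimple, the sum of the graded-simple submodules is everything. -/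
lemma sSup_graded_simples_eq_top (hss : IsSemisimpleModule A M) :
    sSup {N : Submodule A M | IsGradedSubmodule gM N ∧ N ≠ ⊥ ∧
        ∀ N' : Submodule A M, IsGradedSubmodule gM N' → N' ≤ N → N' = ⊥ ∨ N' = N} =
      (⊤ : Submodule A M) := by
  classical
  set S := {N : Submodule A M | IsGradedSubmodule gM N ∧ N ≠ ⊥ ∧
      ∀ N' : Submodule A M, IsGradedSubmodule gM N' → N' ≤ N → N' = ⊥ ∨ N' = N} with hS
  set Sig := sSup S with hSig
  -- it suffices that every homogeneous element lies in `Sig`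
  have hhom : ∀ (d : ℤ) (y : M), y ∈ gM d → y ∈ Sig := by
    by_contra hcon
    push_neg at hcon
    obtain ⟨d, y, hyd, hyS⟩ := hcon
    have hy0 : y ≠ 0 := fun h => hyS (h ▸ Submodule.zero_mem _)
    set P := Submodule.span A {y} with hP
    have hPgr : IsGradedSubmodule gM P := isGraded_span_singleton gA gM hsmul hyd
    have hyP : y ∈ P := Submodule.mem_span_singleton_self y
    haveI hPfd : FiniteDimensional k (P.restrictScalars k) := fd_span_singleton y
    have hSiggr : IsGradedSubmodule gM Sig :=
      isGraded_sSup gA gM hsmul (fun N hN => hN.1)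
    set W := Sig ⊓ P with hW
    have hWgr : IsGradedSubmodule gM W := isGraded_inf gA gM hsmul hSiggr hPgr
    set Vset := {V : Submodule A M | IsGradedSubmodule gM V ∧ V ≤ P ∧ ¬ V ≤ W} with hVset
    have hPV : P ∈ Vset := by
      refine ⟨hPgr, le_refl _, fun hc => hyS ?_⟩
      exact ((hc hyP).1 : y ∈ Sig)
    have fdV : ∀ V : Submodule A M, V ≤ P → FiniteDimensional k (V.restrictScalars k) :=
      fun V hVP => Submodule.finiteDimensional_of_le (S₂ := P.restrictScalars k)
        (fun x hx => hVP hx)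
    set CC := {c : ℕ | ∃ V ∈ Vset, Module.finrank k (V.restrictScalars k) = c} with hCC
    have hCCne : CC.Nonempty := ⟨_, P, hPV, rfl⟩
    obtain ⟨V, hVmem, hVrank⟩ := Nat.sInf_mem hCCne
    have hminV : ∀ V' ∈ Vset, sInf CC ≤ Module.finrank k (V'.restrictScalars k) :=
      fun V' hV' => Nat.sInf_le ⟨V', hV', rfl⟩
    obtain ⟨hVgr, hVP, hVW⟩ := hVmem
    haveI hVfd : FiniteDimensional k (V.restrictScalars k) := fdV V hVP
    have hVbot : V ≠ ⊥ := fun h => hVW (h ▸ bot_le)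
    -- complements
    obtain ⟨C₁, hC₁⟩ := exists_isCompl (V ⊓ W)
    set D := C₁ ⊓ V with hD
    have hDdisj : D ⊓ (V ⊓ W) = ⊥ := by
      have : D ⊓ (V ⊓ W) ≤ C₁ ⊓ (V ⊓ W) := inf_le_inf_right _ inf_le_left
      rw [inf_comm C₁ (V ⊓ W)] at this
      rw [← le_bot_iff]
      exact this.trans (disjoint_iff.1 hC₁.disjoint).le
    have hDsup : (V ⊓ W) ⊔ D = V := by
      rw [hD, ← sup_inf_assoc_of_le C₁ (inf_le_left : V ⊓ W ≤ V),
        codisjoint_iff.1 hC₁.codisjoint, top_inf_eq]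
    have hDbot : D ≠ ⊥ := by
      intro h
      rw [h, sup_bot_eq] at hDsup
      exact hVW (hDsup ▸ inf_le_right)
    obtain ⟨C₀, hC₀⟩ := exists_isCompl (D ⊔ (V ⊓ W))
    set Cc := C₀ ⊔ (V ⊓ W) with hCc
    have hVWCc : V ⊓ W ≤ Cc := le_sup_right
    have h2 : (D ⊔ (V ⊓ W)) ⊓ Cc = V ⊓ W := by
      rw [hCc, sup_comm C₀ (V ⊓ W), inf_comm,
        sup_inf_assoc_of_le C₀ (le_sup_right : V ⊓ W ≤ D ⊔ V ⊓ W),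
        disjoint_iff.1 hC₀.disjoint.symm, sup_bot_eq]
    have hcompl : IsCompl D Cc := by
      constructor
      · rw [disjoint_iff, ← le_bot_iff]
        have h1 : D ⊓ Cc ≤ (D ⊔ (V ⊓ W)) ⊓ Cc := inf_le_inf_right _ le_sup_left
        calc D ⊓ Cc ≤ D ⊓ (V ⊓ W) := le_inf inf_le_left (h1.trans h2.le)
          _ ≤ ⊥ := hDdisj.le
      · rw [codisjoint_iff]
        calc D ⊔ Cc = (D ⊔ (V ⊓ W)) ⊔ C₀ := by
              rw [hCc, sup_comm C₀ (V ⊓ W), ← sup_assoc]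
          _ = ⊤ := codisjoint_iff.1 hC₀.codisjoint
    -- the projection onto D along Cc
    set π : M →ₗ[A] M := D.subtype.comp (Submodule.projectionOnto D Cc hcompl) with hπ
    have hπD : ∀ z ∈ D, π z = z := by
      intro z hz
      have h := Submodule.projectionOnto_apply_left hcompl ⟨z, hz⟩
      have : π z = ((Submodule.projectionOnto D Cc hcompl) z : M) := rfl
      rw [this, h]
    have hπC : ∀ z ∈ Cc, π z = 0 := by
      intro z hz
      have h := Submodule.projectionOnto_apply_of_mem_right hcompl hz
      have : π z = ((Submodule.projectionOnto D Cc hcompl) z : M) := rfl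
      rw [this, h]; rfl
    have hπmem : ∀ z : M, π z ∈ D := fun z => ((Submodule.projectionOnto D Cc hcompl) z).2
    have hDV : D ≤ V := inf_le_right
    have hfdel_mem : ∀ (δ : ℤ) (z : M), z ∈ V → fdel gM π δ z ∈ V := by
      intro δ z hz
      apply Submodule.sum_mem
      intro n _
      have h2 : π (prj gM n z) ∈ V := hDV (hπmem _)
      exact (isGraded_iff gA gM hsmul V).1 hVgr _ h2 (n + δ)
    have hDnotle : ¬ D ≤ V ⊓ W := by
      intro hle
      apply hDbot
      rw [← hDdisj]
      exact (inf_eq_left.2 hle).symm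
    obtain ⟨d₀, hd₀D, hd₀notVW⟩ := SetLike.not_le_iff_exists.1 hDnotle
    have hd₀V : d₀ ∈ V := hDV hd₀D
    obtain ⟨s, hsum⟩ := exists_sum_fdel gM π d₀
    rw [hπD d₀ hd₀D] at hsum
    have hex : ∃ δ ∈ s, fdel gM π δ d₀ ∉ V ⊓ W := by
      by_contra hall
      push_neg at hall
      exact hd₀notVW (hsum ▸ Submodule.sum_mem _ (fun δ hδ => hall δ hδ))
    obtain ⟨δ, hδs, hδnot⟩ := hex
    set Vd := Submodule.map (Fdel gA gM hsmul π δ) V with hVd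
    have hVdV : Vd ≤ V := by rintro _ ⟨z, hzV, rfl⟩; exact hfdel_mem δ z hzV
    have hVdmem : Vd ∈ Vset := by
      refine ⟨isGraded_map_fdel gA gM hsmul hVgr π δ, hVdV.trans hVP, ?_⟩
      intro hle
      refine hδnot ⟨hfdel_mem δ d₀ hd₀V, ?_⟩
      exact hle ⟨d₀, hd₀V, rfl⟩
    haveI : FiniteDimensional k (Vd.restrictScalars k) := fdV Vd (hVdV.trans hVP)
    have hVdeq : Vd = V := by
      apply Submodule.restrictScalars_injective k A M
      exact eq_of_le_of_finrank_le' (fun x hx => hVdV hx)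
        (by rw [hVrank]; exact hminV Vd hVdmem)
    have hsurj : ∀ w ∈ V, ∃ z ∈ V, fdel gM π δ z = w := by
      intro w hw
      have hw' : w ∈ Vd := hVdeq ▸ hw
      obtain ⟨z, hz, hzw⟩ := hw'
      exact ⟨z, hz, hzw⟩
    set Vk := V.restrictScalars k with hVk
    set ρ : Vk →ₗ[k] Vk :=
      ((Fdel gA gM hsmul π δ).restrictScalars k).restrict
        (fun x hx => hfdel_mem δ x hx) with hρ
    have hρsurj : Function.Surjective ρ := by
      rintro ⟨w, hw⟩
      obtain ⟨z, hz, hzw⟩ := hsurj w hw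
      exact ⟨⟨z, hz⟩, Subtype.ext hzw⟩
    have hρinj : Function.Injective ρ := LinearMap.injective_iff_surjective.2 hρsurj
    have hinjV : ∀ z ∈ V, fdel gM π δ z = 0 → z = 0 := by
      intro z hz h0
      have h1 : ρ ⟨z, hz⟩ = 0 := Subtype.ext h0
      have h2 := hρinj (h1.trans (map_zero ρ).symm)
      exact congrArg Subtype.val h2
    rcases eq_or_ne δ 0 with rfl | hδ0
    · -- degree zero: V ⊓ W must vanish, so V is graded-simple, contradiction
      have hVWgr := isGraded_inf gA gM hsmul hVgr hWgr
      have hkill : ∀ z ∈ V ⊓ W, fdel gM π 0 z = 0 := by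
        intro z hz
        rw [fdel_eq_sum gM π 0 z (supp gM z) (le_refl _)]
        apply Finset.sum_eq_zero
        intro n _
        have h1 : prj gM n z ∈ V ⊓ W := (isGraded_iff gA gM hsmul _).1 hVWgr z hz n
        rw [hπC _ (hVWCc h1), prj_zero]
      have hVWbot : V ⊓ W = ⊥ := by
        rw [eq_bot_iff]
        intro z hz
        have := hinjV z hz.1 (hkill z hz)
        simp [this]
      have hVS : V ∈ S := by
        refine ⟨hVgr, hVbot, ?_⟩
        intro N' hN'gr hN'le
        by_cases hNW : N' ≤ W
        · left; rw [← le_bot_iff, ← hVWbot]; exact le_inf hN'le hNW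
        · right
          have hN'mem : N' ∈ Vset := ⟨hN'gr, hN'le.trans hVP, hNW⟩
          haveI := fdV N' (hN'le.trans hVP)
          apply Submodule.restrictScalars_injective k A M
          exact eq_of_le_of_finrank_le' (fun x hx => hN'le hx)
            (by rw [hVrank]; exact hminV N' hN'mem)
      exact hVW (le_inf (le_sSup hVS) hVP)
    · -- nonzero degree: contradiction with finite support
      have hstep : ∀ n : ℤ, (Vk ⊓ gM n) ≠ ⊥ → (Vk ⊓ gM (n + δ)) ≠ ⊥ := by
        intro n hne
        obtain ⟨z, hz, hz0⟩ := Submodule.exists_mem_ne_zero_of_ne_bot hne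
        refine (Submodule.ne_bot_iff _).2 ⟨fdel gM π δ z, ⟨?_, ?_⟩, ?_⟩
        · exact hfdel_mem δ z hz.1
        · rw [fdel_homog gM π δ hz.2]; exact prj_mem gM (n + δ) _
        · intro h0; exact hz0 (hinjV z hz.1 h0)
      have hn₀ : ∃ n₀ : ℤ, (Vk ⊓ gM n₀) ≠ ⊥ := by
        obtain ⟨m, hmV, hm0, d', hmd'⟩ := exists_homog_of_ne_bot gA gM hsmul hVgr hVbot
        exact ⟨d', (Submodule.ne_bot_iff _).2 ⟨m, ⟨hmV, hmd'⟩, hm0⟩⟩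
      obtain ⟨n₀, hn₀⟩ := hn₀
      have hall : ∀ t : ℕ, (Vk ⊓ gM (n₀ + t * δ)) ≠ ⊥ := by
        intro t
        induction t with
        | zero =>
          rw [show n₀ + (0 : ℕ) * δ = n₀ by push_cast; ring]
          exact hn₀
        | succ t ih =>
          have := hstep (n₀ + t * δ) ih
          rwa [show n₀ + t * δ + δ = n₀ + ((t : ℕ) + 1 : ℕ) * δ by push_cast; ring] at this
      haveI : FiniteDimensional k Vk := hVfd
      exact no_infinite_progression gA gM hsmul Vk n₀ δ hδ0 hall
  rw [eq_top_iff]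
  intro x _
  rw [← sum_supp_prj gM (supp gM x) x (le_refl _)]
  exact Submodule.sum_mem _ (fun n _ => hhom n (prj gM n x) (prj_mem gM n x))

end Aux2


/-- Let `Ā` be a finite-dimensional ℤ-graded `k`-algebra (here denoted
`A`) and let `M` be a graded `Ā`-module.  Then:

(a) `M` is a sum of graded-simple graded submodules if and only if the underlying
(ungraded) `Ā`-module `M` is semisimple;

(b) `M` is graded-simple (nonzero, with only graded submodules `0` and `M`) if and
only if the underlying `Ā`-module `M` is simple. -/
theorem statement14 {k A M : Type} [Field k] [Ring A] [Algebra k A]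
    [FiniteDimensional k A]
    (gA : ℤ → Submodule k A) [GradedAlgebra gA]
    [AddCommGroup M] [Module A M] [Module k M] [IsScalarTower k A M]
    (gM : ℤ → Submodule k M) [DirectSum.Decomposition gM]
    (hsmul : ∀ (i j : ℤ), ∀ a ∈ gA i, ∀ m ∈ gM j, a • m ∈ gM (i + j)) :
    ((sSup {N : Submodule A M | IsGradedSubmodule gM N ∧ N ≠ ⊥ ∧
          ∀ N' : Submodule A M, IsGradedSubmodule gM N' → N' ≤ N → N' = ⊥ ∨ N' = N} =
        (⊤ : Submodule A M)) ↔
      IsSemisimpleModule A M) ∧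
    ((Nontrivial M ∧ ∀ N : Submodule A M, IsGradedSubmodule gM N → N = ⊥ ∨ N = ⊤) ↔
      IsSimpleModule A M) := by
  constructor
  · constructor
    · intro hsup
      have hsub : {N : Submodule A M | IsGradedSubmodule gM N ∧ N ≠ ⊥ ∧
          ∀ N' : Submodule A M, IsGradedSubmodule gM N' → N' ≤ N → N' = ⊥ ∨ N' = N} ⊆
          {m : Submodule A M | IsSimpleModule A m} := by
        rintro N ⟨hg, hb, hs⟩
        rw [Set.mem_setOf_eq, isSimpleModule_iff_isAtom]
        exact ⟨hb, fun b hb' =>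
          (key_atom gA gM hsmul hg hb hs b hb'.le).resolve_right (fun h => hb'.ne h)⟩
      apply IsSemisimpleModule.of_sSup_simples_eq_top
      apply le_antisymm le_top
      rw [← hsup]
      exact sSup_le_sSup hsub
    · exact sSup_graded_simples_eq_top gA gM hsmul
  · constructor
    · rintro ⟨hnt, hall⟩
      have htop : (⊤ : Submodule A M) ≠ ⊥ := by
        obtain ⟨u, v, huv⟩ := hnt
        intro h
        have hu : u ∈ (⊤ : Submodule A M) := trivial
        have hv : v ∈ (⊤ : Submodule A M) := trivial
        rw [h, Submodule.mem_bot] at hu hv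
        exact huv (hu.trans hv.symm)
      have hK := key_atom gA gM hsmul (isGraded_top gA gM hsmul) htop
        (fun N' hg _ => hall N' hg)
      haveI : Nontrivial (Submodule A M) := ⟨⟨⊥, ⊤, fun h => htop h.symm⟩⟩
      exact { toIsSimpleOrder := ⟨fun N => (hK N le_top).imp id id⟩ }
    · intro hsimp
      refine ⟨IsSimpleModule.nontrivial A M, fun N _ => eq_bot_or_eq_top N⟩
end
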